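/- arXiv:2207.12674 — 13 statements merged into one kernel-verified Lean document; each statement's English description precedes it below -/
import Mathlib

section
/- If x_opt is a global optimal solution of the trust-region problem min (1/2)x^T A x + g^T x subject to ||x|| ≤ Δ, with Lagrange multiplier λ_opt ≥ 0 satisfying (A+λ_opt I)x_opt = -g and A+λ_opt I ⪰ 0, then for any x with ||x|| = Δ, f(x) - f(x_opt) = (1/2)(x_opt - x)^T (A+λ_opt I)(x_opt - x) ≥ 0. -/
open Matrix

theorem stmt0 {n : ℕ} (A : Matrix (Fin n) (Fin n) ℝ) (hA : A.IsSymm)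
    (g : Fin n → ℝ) (hg : g ≠ 0) (Δ : ℝ) (hΔ : 0 < Δ)
    (xopt : Fin n → ℝ) (lopt : ℝ) (hlopt : 0 ≤ lopt)
    (hxn : Real.sqrt (xopt ⬝ᵥ xopt) = Δ)
    (heq : (A + lopt • 1).mulVec xopt = -g)
    (hpsd : (A + lopt • 1).PosSemidef)
    (x : Fin n → ℝ) (hx : Real.sqrt (x ⬝ᵥ x) = Δ) :
    ((1/2) * (x ⬝ᵥ A.mulVec x) + g ⬝ᵥ x)
        - ((1/2) * (xopt ⬝ᵥ A.mulVec xopt) + g ⬝ᵥ xopt)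
      = (1/2) * ((xopt - x) ⬝ᵥ (A + lopt • 1).mulVec (xopt - x)) ∧
    0 ≤ (1/2) * ((xopt - x) ⬝ᵥ (A + lopt • 1).mulVec (xopt - x)) := by
  set B := A + lopt • (1 : Matrix (Fin n) (Fin n) ℝ) with hB
  have hBsymm : B.IsSymm := hpsd.1
  -- norms
  have hx2 : x ⬝ᵥ x = Δ ^ 2 := by
    have h0 : 0 ≤ x ⬝ᵥ x :=
      Finset.sum_nonneg fun i _ => mul_self_nonneg (x i)
    rw [← hx, Real.sq_sqrt h0]
  have hxo2 : xopt ⬝ᵥ xopt = Δ ^ 2 := by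
    have h0 : 0 ≤ xopt ⬝ᵥ xopt :=
      Finset.sum_nonneg fun i _ => mul_self_nonneg (xopt i)
    rw [← hxn, Real.sq_sqrt h0]
  -- symmetry of bilinear form
  have hsym : ∀ u v : Fin n → ℝ, u ⬝ᵥ B.mulVec v = v ⬝ᵥ B.mulVec u := by
    intro u v
    rw [dotProduct_mulVec, ← mulVec_transpose, hBsymm.eq, dotProduct_comm]
  -- key identities
  have h1 : x ⬝ᵥ B.mulVec xopt = -(g ⬝ᵥ x) := by
    rw [heq, dotProduct_neg, dotProduct_comm]
  have h2 : xopt ⬝ᵥ B.mulVec xopt = -(g ⬝ᵥ xopt) := by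
    rw [heq, dotProduct_neg, dotProduct_comm]
  have h3 : xopt ⬝ᵥ B.mulVec x = -(g ⬝ᵥ x) := by rw [hsym]; exact h1
  -- relate B-quadratic to A-quadratic
  have hqx : x ⬝ᵥ B.mulVec x = x ⬝ᵥ A.mulVec x + lopt * Δ ^ 2 := by
    rw [hB, add_mulVec, dotProduct_add, smul_mulVec, one_mulVec,
      dotProduct_smul, smul_eq_mul, hx2]
  have hqxo : xopt ⬝ᵥ B.mulVec xopt = xopt ⬝ᵥ A.mulVec xopt + lopt * Δ ^ 2 := by
    rw [hB, add_mulVec, dotProduct_add, smul_mulVec, one_mulVec,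
      dotProduct_smul, smul_eq_mul, hxo2]
  -- expand the difference quadratic
  have hexp : (xopt - x) ⬝ᵥ B.mulVec (xopt - x)
      = xopt ⬝ᵥ B.mulVec xopt - xopt ⬝ᵥ B.mulVec x - x ⬝ᵥ B.mulVec xopt
        + x ⬝ᵥ B.mulVec x := by
    rw [mulVec_sub, sub_dotProduct, dotProduct_sub, dotProduct_sub]
    ring
  constructor
  · rw [hexp]
    linarith [h1, h2, h3, hqx, hqxo]
  · have h := hpsd.dotProduct_mulVec_nonneg (xopt - x)
    simp only [star_trivial] at h
    linarith
end

section
/- Let x_opt with ||x_opt|| = Δ and Q_k have orthonormal columns. Then Δ - ||Q_k Q_k^T x_opt|| ≤ ||(I - Q_k Q_k^T) x_opt||^2 / Δ. -/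
open Matrix

theorem stmt1 {n k : ℕ} (Q : Matrix (Fin n) (Fin k) ℝ) (hQ : Qᵀ * Q = 1)
    (Δ : ℝ) (hΔ : 0 < Δ) (xopt : Fin n → ℝ)
    (hx : Real.sqrt (xopt ⬝ᵥ xopt) = Δ) :
    Δ - Real.sqrt ((Q * Qᵀ).mulVec xopt ⬝ᵥ (Q * Qᵀ).mulVec xopt)
      ≤ (Real.sqrt ((xopt - (Q * Qᵀ).mulVec xopt) ⬝ᵥ (xopt - (Q * Qᵀ).mulVec xopt)))^2 / Δ := by
  set P := Q * Qᵀ with hP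
  set p := P.mulVec xopt with hp
  -- idempotence
  have hidem : P * P = P := by
    rw [hP, Matrix.mul_assoc, ← Matrix.mul_assoc Qᵀ Q Qᵀ, hQ, Matrix.one_mul]
  have hsym : Pᵀ = P := by rw [hP]; simp [Matrix.transpose_mul]
  -- p ⬝ x = p ⬝ p
  have key : p ⬝ᵥ xopt = p ⬝ᵥ p := by
    conv_rhs => rw [hp]
    calc p ⬝ᵥ xopt = (P *ᵥ p) ⬝ᵥ xopt := by
          rw [show P *ᵥ p = p from by
            rw [hp, Matrix.mulVec_mulVec, hidem]]
    _ = (p ᵥ* P) ⬝ᵥ xopt := by rw [← Matrix.vecMul_transpose, hsym]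
    _ = p ⬝ᵥ (P *ᵥ xopt) := (Matrix.dotProduct_mulVec _ _ _).symm
  have hnn : ∀ v : Fin n → ℝ, 0 ≤ v ⬝ᵥ v := fun v =>
    Finset.sum_nonneg fun i _ => mul_self_nonneg _
  have hpn : 0 ≤ p ⬝ᵥ p := hnn p
  have hxn : 0 ≤ xopt ⬝ᵥ xopt := hnn xopt
  have hcomm : xopt ⬝ᵥ p = p ⬝ᵥ xopt := dotProduct_comm _ _
  -- residual norm squared
  have hres : (xopt - p) ⬝ᵥ (xopt - p) = xopt ⬝ᵥ xopt - p ⬝ᵥ p := by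
    rw [sub_dotProduct, dotProduct_sub, dotProduct_sub, hcomm, key]
    ring
  have hxx : xopt ⬝ᵥ xopt = Δ ^ 2 := by
    rw [← hx, Real.sq_sqrt hxn]
  have hresnn : 0 ≤ (xopt - p) ⬝ᵥ (xopt - p) := hnn _
  have hsq : (Real.sqrt ((xopt - p) ⬝ᵥ (xopt - p)))^2 = Δ ^ 2 - p ⬝ᵥ p := by
    rw [Real.sq_sqrt hresnn, hres, hxx]
  rw [hsq]
  have hple : p ⬝ᵥ p ≤ Δ ^ 2 := by nlinarith [hresnn, hres, hxx]
  have hsp : Real.sqrt (p ⬝ᵥ p) ≤ Δ := by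
    rw [← hx]
    exact Real.sqrt_le_sqrt (by nlinarith)
  have hsp2 : (Real.sqrt (p ⬝ᵥ p))^2 = p ⬝ᵥ p := Real.sq_sqrt hpn
  rw [le_div_iff₀ hΔ]
  nlinarith [Real.sqrt_nonneg (p ⬝ᵥ p)]
end

section
/- Let x_opt with ||x_opt|| = Δ, Q_k with orthonormal columns, Q_k Q_k^T x_opt ≠ 0, and y_k = Δ · Q_k Q_k^T x_opt / ||Q_k Q_k^T x_opt||. Then ||x_opt - y_k||^2 ≤ ε_k^2 + ε_k^4/Δ^2 where ε_k = ||(I - Q_k Q_k^T) x_opt||. -/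
open Matrix

theorem stmt2 {n k : ℕ} (Q : Matrix (Fin n) (Fin k) ℝ) (hQ : Qᵀ * Q = 1)
    (Δ : ℝ) (hΔ : 0 < Δ) (xopt : Fin n → ℝ)
    (hx : Real.sqrt (xopt ⬝ᵥ xopt) = Δ)
    (hne : (Q * Qᵀ).mulVec xopt ≠ 0)
    (ε : ℝ)
    (hε : ε = Real.sqrt ((xopt - (Q * Qᵀ).mulVec xopt) ⬝ᵥ (xopt - (Q * Qᵀ).mulVec xopt)))
    (y : Fin n → ℝ)
    (hy : y = (Δ / Real.sqrt ((Q * Qᵀ).mulVec xopt ⬝ᵥ (Q * Qᵀ).mulVec xopt)) •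
        (Q * Qᵀ).mulVec xopt) :
    (xopt - y) ⬝ᵥ (xopt - y) ≤ ε^2 + ε^4 / Δ^2 := by
  set P : Matrix (Fin n) (Fin n) ℝ := Q * Qᵀ with hP
  set p : Fin n → ℝ := P.mulVec xopt with hp
  have hnonneg : ∀ v : Fin n → ℝ, 0 ≤ v ⬝ᵥ v := fun v =>
    Finset.sum_nonneg fun i _ => mul_self_nonneg (v i)
  have hPsym : Pᵀ = P := by
    rw [hP, transpose_mul, transpose_transpose]
  have hPP : P * P = P := by
    rw [hP, Matrix.mul_assoc, ← Matrix.mul_assoc Qᵀ Q Qᵀ, hQ, Matrix.one_mul]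
  have hPp : P *ᵥ p = p := by rw [hp, mulVec_mulVec, hPP]
  have hvm : xopt ᵥ* P = p := by rw [← hPsym, vecMul_transpose]
  have h1 : p ⬝ᵥ p = xopt ⬝ᵥ p := by
    conv_rhs => rw [← hPp, dotProduct_mulVec, hvm]
  have hppos : 0 < p ⬝ᵥ p := by
    rcases lt_or_eq_of_le (hnonneg p) with h | h
    · exact h
    · exact absurd (dotProduct_self_eq_zero.mp h.symm) hne
  set s : ℝ := Real.sqrt (p ⬝ᵥ p) with hs
  have hspos : 0 < s := Real.sqrt_pos.mpr hppos
  have hs2 : s ^ 2 = p ⬝ᵥ p := Real.sq_sqrt (le_of_lt hppos)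
  have hΔ2 : xopt ⬝ᵥ xopt = Δ ^ 2 := by
    rw [← hx, Real.sq_sqrt (hnonneg xopt)]
  have hε2 : ε ^ 2 = Δ ^ 2 - s ^ 2 := by
    rw [hε, Real.sq_sqrt (hnonneg _), hs2]
    have : (xopt - p) ⬝ᵥ (xopt - p)
        = xopt ⬝ᵥ xopt - xopt ⬝ᵥ p - p ⬝ᵥ xopt + p ⬝ᵥ p := by
      simp [sub_dotProduct, dotProduct_sub]; ring
    rw [this, dotProduct_comm p xopt, ← h1, hΔ2]; ring
  have hxp : xopt ⬝ᵥ p = s ^ 2 := by rw [← h1, hs2]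
  have hlhs : (xopt - y) ⬝ᵥ (xopt - y) = 2 * Δ ^ 2 - 2 * Δ * s := by
    rw [hy]
    have hexp : (xopt - (Δ / s) • p) ⬝ᵥ (xopt - (Δ / s) • p)
        = xopt ⬝ᵥ xopt - (Δ / s) * (xopt ⬝ᵥ p) - (Δ / s) * (p ⬝ᵥ xopt)
          + (Δ / s) ^ 2 * (p ⬝ᵥ p) := by
      simp [sub_dotProduct, dotProduct_sub, smul_dotProduct, dotProduct_smul,
        smul_eq_mul]; ring
    rw [hexp, dotProduct_comm p xopt, hxp, hΔ2, ← hs2]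
    field_simp
    ring
  rw [hlhs, hε2]
  have hfrac : (Δ ^ 2 - s ^ 2) ^ 2 / Δ ^ 2 ≥ 2 * Δ ^ 2 - 2 * Δ * s - (Δ ^ 2 - s ^ 2) := by
    rw [ge_iff_le, le_div_iff₀ (by positivity)]
    nlinarith [sq_nonneg (s - Δ), mul_pos hspos hΔ, sq_nonneg (s * (s - Δ)),
      mul_nonneg (mul_nonneg hspos.le (sq_nonneg (s - Δ))) hΔ.le]
  have : ε ^ 4 = (Δ ^ 2 - s ^ 2) ^ 2 := by rw [← hε2]; ring
  rw [this]
  linarith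
end

section
/- Suppose ||x_opt|| = ||x_k|| = Δ, x_k minimizes f over {x ∈ K_k : ||x|| ≤ Δ} where K_k is a subspace containing Q_k Q_k^T x_opt (Q_k an orthonormal basis of K_k), f(x) - f(x_opt) = (1/2)(x_opt - x)^T A_opt (x_opt - x) for all ||x|| = Δ with A_opt ⪰ 0. Then 0 ≤ f(x_k) - f(x_opt) ≤ (1/2)||A_opt|| (1 + ε_k^2/Δ^2) ε_k^2, where ε_k = ||(I - Q_k Q_k^T)x_opt||. -/
open Matrix RealInnerProductSpace

noncomputable def fobj {n : ℕ} (A : Matrix (Fin n) (Fin n) ℝ) (g x : Fin n → ℝ) : ℝ :=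
  (1/2) * (x ⬝ᵥ A.mulVec x) + g ⬝ᵥ x

lemma dot_self_nonneg' {n : ℕ} (v : Fin n → ℝ) : 0 ≤ v ⬝ᵥ v :=
  Finset.sum_nonneg fun _ _ => mul_self_nonneg _

lemma quad_le_opNorm' {n : ℕ} (M : Matrix (Fin n) (Fin n) ℝ) (v : Fin n → ℝ) :
    v ⬝ᵥ M.mulVec v ≤
      ‖(Matrix.toEuclideanCLM (𝕜 := ℝ) M : EuclideanSpace ℝ (Fin n) →L[ℝ] EuclideanSpace ℝ (Fin n))‖ * (v ⬝ᵥ v) := by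
  set T := (Matrix.toEuclideanCLM (𝕜 := ℝ) M : EuclideanSpace ℝ (Fin n) →L[ℝ] EuclideanSpace ℝ (Fin n)) with hT
  set v' : EuclideanSpace ℝ (Fin n) := (WithLp.equiv 2 (Fin n → ℝ)).symm v with hv'
  have h1 : v ⬝ᵥ M.mulVec v = ⟪v', T v'⟫ := by
    rw [EuclideanSpace.inner_eq_star_dotProduct, hT, hv']
    simp [Matrix.toLin'_apply, dotProduct, mul_comm]
  have h2 : v ⬝ᵥ v = ‖v'‖ * ‖v'‖ := by
    rw [← real_inner_self_eq_norm_mul_norm, EuclideanSpace.inner_eq_star_dotProduct, hv']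
    simp [dotProduct]
  rw [h1, h2]
  calc ⟪v', T v'⟫ ≤ ‖v'‖ * ‖T v'‖ := real_inner_le_norm _ _
    _ ≤ ‖v'‖ * (‖T‖ * ‖v'‖) := mul_le_mul_of_nonneg_left (T.le_opNorm v') (norm_nonneg _)
    _ = ‖T‖ * (‖v'‖ * ‖v'‖) := by ring

theorem stmt3 {n k : ℕ} (A : Matrix (Fin n) (Fin n) ℝ) (hA : A.IsSymm)
    (g : Fin n → ℝ) (Δ : ℝ) (hΔ : 0 < Δ) (lopt : ℝ) (hlopt : 0 ≤ lopt)
    (xopt : Fin n → ℝ)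
    (hpsd : (A + lopt • 1).PosSemidef)
    (heq : (A + lopt • 1).mulVec xopt = -g)
    (Q : Matrix (Fin n) (Fin k) ℝ) (hQ : Qᵀ * Q = 1)
    (xk : Fin n → ℝ) (hxkmem : ∃ c, xk = Q.mulVec c)
    (hxknorm : Real.sqrt (xk ⬝ᵥ xk) = Δ)
    (hxoptnorm : Real.sqrt (xopt ⬝ᵥ xopt) = Δ)
    (hmin : ∀ x : Fin n → ℝ, (∃ c, x = Q.mulVec c) → Real.sqrt (x ⬝ᵥ x) ≤ Δ →
      fobj A g xk ≤ fobj A g x)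
    (hquad : ∀ x : Fin n → ℝ, Real.sqrt (x ⬝ᵥ x) = Δ →
      fobj A g x - fobj A g xopt
        = (1/2) * ((xopt - x) ⬝ᵥ (A + lopt • 1).mulVec (xopt - x)))
    (ε : ℝ)
    (hε : ε = Real.sqrt ((xopt - (Q * Qᵀ).mulVec xopt) ⬝ᵥ (xopt - (Q * Qᵀ).mulVec xopt))) :
    0 ≤ fobj A g xk - fobj A g xopt ∧
      fobj A g xk - fobj A g xopt ≤
        (1/2) * ‖(Matrix.toEuclideanCLM (𝕜 := ℝ) (A + lopt • 1) : EuclideanSpace ℝ (Fin n) →L[ℝ] EuclideanSpace ℝ (Fin n))‖ *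
          (1 + ε^2 / Δ^2) * ε^2 := by
  set M := A + lopt • (1 : Matrix (Fin n) (Fin n) ℝ) with hM
  set C := ‖(Matrix.toEuclideanCLM (𝕜 := ℝ) M : EuclideanSpace ℝ (Fin n) →L[ℝ] EuclideanSpace ℝ (Fin n))‖ with hC
  have hC0 : 0 ≤ C := norm_nonneg _
  set p := (Q * Qᵀ).mulVec xopt with hp
  set w := xopt - p with hw
  -- orthogonality: w is orthogonal to the range of Q
  have hQTw : Qᵀ.mulVec w = 0 := by
    have : Qᵀ.mulVec p = Qᵀ.mulVec xopt := by
      rw [hp, Matrix.mulVec_mulVec, ← Matrix.mul_assoc, hQ, Matrix.one_mul]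
    rw [hw, Matrix.mulVec_sub, this, sub_self]
  have hworth : ∀ c : Fin k → ℝ, w ⬝ᵥ Q.mulVec c = 0 := by
    intro c
    rw [Matrix.dotProduct_mulVec, ← Matrix.mulVec_transpose, hQTw, zero_dotProduct]
  have hpran : ∃ c, p = Q.mulVec c := ⟨Qᵀ.mulVec xopt, by rw [hp, Matrix.mulVec_mulVec]⟩
  have hwp : w ⬝ᵥ p = 0 := hpran.choose_spec ▸ hworth _
  have hpw : p ⬝ᵥ w = 0 := by rw [dotProduct_comm]; exact hwp
  -- squared norms
  have hx2 : xopt ⬝ᵥ xopt = Δ ^ 2 := by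
    rw [← hxoptnorm, Real.sq_sqrt (dot_self_nonneg' _)]
  have hxk2 : xk ⬝ᵥ xk = Δ ^ 2 := by
    rw [← hxknorm, Real.sq_sqrt (dot_self_nonneg' _)]
  have hε2 : ε ^ 2 = w ⬝ᵥ w := by
    rw [hε, Real.sq_sqrt (dot_self_nonneg' _)]
  have hεnn : 0 ≤ ε := hε ▸ Real.sqrt_nonneg _
  have hxopt_pw : xopt = p + w := by rw [hw]; ring
  have hpp : p ⬝ᵥ p = Δ ^ 2 - ε ^ 2 := by
    have := hx2
    rw [hxopt_pw] at this
    rw [add_dotProduct, dotProduct_add, dotProduct_add] at this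
    rw [hε2]; linarith [hwp, hpw]
  have hε2le : ε ^ 2 ≤ Δ ^ 2 := by
    have := dot_self_nonneg' p; linarith [hpp]
  -- lower bound
  have hlow : 0 ≤ fobj A g xk - fobj A g xopt := by
    rw [hquad xk hxknorm]
    have := hpsd.dotProduct_mulVec_nonneg (xopt - xk)
    simp only [star_trivial] at this
    linarith
  refine ⟨hlow, ?_⟩
  -- factor bound: it suffices to find x̃ in range Q with ‖x̃‖ = Δ and
  -- (xopt - x̃)⬝(xopt - x̃) ≤ (1 + ε²/Δ²) ε²
  have key : ∀ xt : Fin n → ℝ, (∃ c, xt = Q.mulVec c) → Real.sqrt (xt ⬝ᵥ xt) = Δ →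
      (xopt - xt) ⬝ᵥ (xopt - xt) ≤ (1 + ε^2/Δ^2) * ε^2 →
      fobj A g xk - fobj A g xopt ≤ (1/2) * C * (1 + ε^2 / Δ^2) * ε^2 := by
    intro xt hmem hnorm hd
    have h1 : fobj A g xk ≤ fobj A g xt := hmin xt hmem (le_of_eq hnorm)
    have h2 : fobj A g xt - fobj A g xopt
        = (1/2) * ((xopt - xt) ⬝ᵥ M.mulVec (xopt - xt)) := hquad xt hnorm
    have h3 := quad_le_opNorm' M (xopt - xt)
    rw [← hC] at h3
    have h4 : (xopt - xt) ⬝ᵥ M.mulVec (xopt - xt) ≤ C * ((1 + ε^2/Δ^2) * ε^2) := by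
      calc (xopt - xt) ⬝ᵥ M.mulVec (xopt - xt) ≤ C * ((xopt - xt) ⬝ᵥ (xopt - xt)) := h3
        _ ≤ C * ((1 + ε^2/Δ^2) * ε^2) := mul_le_mul_of_nonneg_left hd hC0
    calc fobj A g xk - fobj A g xopt ≤ fobj A g xt - fobj A g xopt := by linarith
      _ = (1/2) * ((xopt - xt) ⬝ᵥ M.mulVec (xopt - xt)) := h2
      _ ≤ (1/2) * (C * ((1 + ε^2/Δ^2) * ε^2)) := by linarith
      _ = (1/2) * C * (1 + ε^2/Δ^2) * ε^2 := by ring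
  by_cases hp0 : p ⬝ᵥ p = 0
  · -- p = 0 : xopt orthogonal to range Q; use xk itself
    have hpz : p = 0 := dotProduct_self_eq_zero.mp hp0
    have hwx : w = xopt := by rw [hw, hpz, sub_zero]
    have hεΔ : ε ^ 2 = Δ ^ 2 := by rw [hε2, hwx, hx2]
    have hoxk : xopt ⬝ᵥ xk = 0 := by
      obtain ⟨c, hc⟩ := hxkmem
      rw [← hwx, hc]; exact hworth c
    have hkxo : xk ⬝ᵥ xopt = 0 := by rw [dotProduct_comm]; exact hoxk
    refine key xk hxkmem hxknorm ?_
    have hdd : (xopt - xk) ⬝ᵥ (xopt - xk) = 2 * Δ ^ 2 := by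
      rw [sub_dotProduct, dotProduct_sub, dotProduct_sub]
      rw [hx2, hxk2, hoxk, hkxo]; ring
    rw [hdd, hεΔ]
    have : Δ ^ 2 / Δ ^ 2 = 1 := div_self (by positivity)
    rw [this]; ring_nf; linarith
  · -- p ≠ 0 : use scaled projection
    have hppos : 0 < p ⬝ᵥ p := lt_of_le_of_ne (dot_self_nonneg' p) (Ne.symm hp0)
    set r := Real.sqrt (p ⬝ᵥ p) with hr
    have hrpos : 0 < r := Real.sqrt_pos.mpr hppos
    have hr2 : r ^ 2 = p ⬝ᵥ p := Real.sq_sqrt hppos.le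
    have hrle : r ≤ Δ := by
      rw [hr, show Δ = Real.sqrt (Δ ^ 2) from (Real.sqrt_sq hΔ.le).symm]
      exact Real.sqrt_le_sqrt (by linarith [hpp, sq_nonneg ε])
    set s := Δ / r with hs
    have hsr : s * r = Δ := div_mul_cancel₀ Δ hrpos.ne'
    set xt := s • p with hxt
    have hmem : ∃ c, xt = Q.mulVec c := by
      obtain ⟨c, hc⟩ := hpran
      exact ⟨s • c, by rw [hxt, hc, Matrix.mulVec_smul]⟩
    have hxtxt : xt ⬝ᵥ xt = Δ ^ 2 := by
      rw [hxt, smul_dotProduct, dotProduct_smul, smul_eq_mul, smul_eq_mul,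
        ← hr2]
      linear_combination (s * r + Δ) * hsr
    have hnorm : Real.sqrt (xt ⬝ᵥ xt) = Δ := by
      rw [hxtxt, Real.sqrt_sq hΔ.le]
    refine key xt hmem hnorm ?_
    -- (xopt - xt)⬝(xopt - xt) = (1-s)² (p⬝p) + ε² = (Δ - r)² + ε²
    have hdd : (xopt - xt) ⬝ᵥ (xopt - xt) = (Δ - r) ^ 2 + ε ^ 2 := by
      have hdw : xopt - xt = (1 - s) • p + w := by
        rw [hxopt_pw, hxt]; ext i; simp [Pi.smul_apply, smul_eq_mul]; ring
      rw [hdw, add_dotProduct, dotProduct_add, dotProduct_add,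
        smul_dotProduct, smul_dotProduct, dotProduct_smul,
        dotProduct_smul, hwp, hpw, ← hr2, ← hε2]
      simp only [smul_eq_mul, mul_zero, zero_mul]
      linear_combination (s * r + Δ - 2 * r) * hsr
    rw [hdd]
    -- (Δ - r)² ≤ ε⁴/Δ², since (Δ-r)(Δ+r) = ε²
    have hkey : (Δ - r) ^ 2 ≤ ε ^ 2 / Δ ^ 2 * ε ^ 2 := by
      rw [div_mul_eq_mul_div, le_div_iff₀ (by positivity)]
      have h1 : (Δ - r) * (Δ + r) = ε ^ 2 := by linear_combination (-1) * hr2 + (-1) * hpp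
      have h2 : Δ ^ 2 ≤ (Δ + r) ^ 2 := by nlinarith [mul_nonneg hΔ.le hrpos.le, sq_nonneg r]
      have h3 : (Δ - r) ^ 2 * Δ ^ 2 ≤ (Δ - r) ^ 2 * (Δ + r) ^ 2 :=
        mul_le_mul_of_nonneg_left h2 (sq_nonneg _)
      have h4 : (Δ - r) ^ 2 * (Δ + r) ^ 2 = ε ^ 2 * ε ^ 2 := by
        linear_combination ((Δ - r) * (Δ + r) + ε ^ 2) * h1
      linarith
    linarith [hkey]
end

section
/- Under the same assumptions, with A_opt = A + λ_opt I positive definite, smallest eigenvalue α_n + λ_opt > 0 and κ = ||A_opt||/(α_n+λ_opt), one has ||x_k - x_opt|| ≤ sqrt(κ (1 + ε_k^2/Δ^2)) · ε_k. -/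
open Matrix

lemma eig_quad_lb {n : ℕ} (B : Matrix (Fin n) (Fin n) ℝ) (hB : B.PosDef)
    (μ : ℝ) (hμ : μ = ⨅ i, hB.1.eigenvalues i) (d : Fin n → ℝ) :
    μ * (d ⬝ᵥ d) ≤ d ⬝ᵥ B *ᵥ d := by
  set U : Matrix (Fin n) (Fin n) ℝ := (hB.1.eigenvectorUnitary : Matrix (Fin n) (Fin n) ℝ) with hU
  have hstar : star U = Uᵀ := rfl
  have hUU : U * Uᵀ = 1 := by
    rw [← hstar]; exact (Matrix.mem_unitaryGroup_iff).mp hB.1.eigenvectorUnitary.2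
  set w : Fin n → ℝ := Uᵀ *ᵥ d with hw
  have hdw : d ⬝ᵥ d = w ⬝ᵥ w := by
    rw [hw, Matrix.dotProduct_mulVec, Matrix.vecMul_transpose, Matrix.mulVec_mulVec, hUU,
      Matrix.one_mulVec]
  have hspec' : B = U * Matrix.diagonal (RCLike.ofReal ∘ hB.1.eigenvalues) * Uᵀ :=
    hB.1.spectral_theorem
  have hquad : d ⬝ᵥ B *ᵥ d = ∑ i, hB.1.eigenvalues i * (w i * w i) := by
    conv_lhs => rw [hspec']
    rw [← Matrix.mulVec_mulVec, ← Matrix.mulVec_mulVec, Matrix.dotProduct_mulVec,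
      ← Matrix.mulVec_transpose, ← hw]
    simp [Matrix.mulVec_diagonal, dotProduct, Function.comp, mul_comm, mul_left_comm]
  rw [hdw, hquad, dotProduct, Finset.mul_sum]
  apply Finset.sum_le_sum
  intro i _
  have hle : μ ≤ hB.1.eigenvalues i := hμ ▸ ciInf_le (Finite.bddBelow_range _) i
  nlinarith [mul_self_nonneg (w i)]

theorem stmt4 {n k : ℕ} (A : Matrix (Fin n) (Fin n) ℝ) (hA : A.IsSymm)
    (g : Fin n → ℝ) (Δ : ℝ) (hΔ : 0 < Δ) (lopt : ℝ) (hlopt : 0 ≤ lopt)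
    (xopt xk : Fin n → ℝ)
    (hpd : (A + lopt • 1).PosDef)
    (Q : Matrix (Fin n) (Fin k) ℝ) (hQ : Qᵀ * Q = 1)
    (hxknorm : Real.sqrt (xk ⬝ᵥ xk) = Δ)
    (hxoptnorm : Real.sqrt (xopt ⬝ᵥ xopt) = Δ)
    (ε : ℝ)
    (hε : ε = Real.sqrt ((xopt - (Q * Qᵀ).mulVec xopt) ⬝ᵥ (xopt - (Q * Qᵀ).mulVec xopt)))
    (μ : ℝ) (hμ : μ = ⨅ i, hpd.1.eigenvalues i) (hμpos : 0 < μ)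
    (κ : ℝ) (hκ : κ = ‖(Matrix.toEuclideanCLM (𝕜 := ℝ) (A + lopt • 1) : EuclideanSpace ℝ (Fin n) →L[ℝ] EuclideanSpace ℝ (Fin n))‖ / μ)
    (hquadeq : fobj A g xk - fobj A g xopt
      = (1/2) * ((xopt - xk) ⬝ᵥ (A + lopt • 1).mulVec (xopt - xk)))
    (hquadle : fobj A g xk - fobj A g xopt
      ≤ (1/2) * ‖(Matrix.toEuclideanCLM (𝕜 := ℝ) (A + lopt • 1) : EuclideanSpace ℝ (Fin n) →L[ℝ] EuclideanSpace ℝ (Fin n))‖ * (1 + ε^2 / Δ^2) * ε^2) :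
    Real.sqrt ((xk - xopt) ⬝ᵥ (xk - xopt)) ≤ Real.sqrt (κ * (1 + ε^2 / Δ^2)) * ε := by
  set N : ℝ := ‖(Matrix.toEuclideanCLM (𝕜 := ℝ) (A + lopt • 1) : EuclideanSpace ℝ (Fin n) →L[ℝ] EuclideanSpace ℝ (Fin n))‖ with hN
  set d : Fin n → ℝ := xopt - xk with hd
  have hlb : μ * (d ⬝ᵥ d) ≤ d ⬝ᵥ (A + lopt • 1).mulVec d :=
    eig_quad_lb _ hpd μ hμ d
  have hNnn : 0 ≤ N := norm_nonneg _
  have hεnn : 0 ≤ ε := hε ▸ Real.sqrt_nonneg _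
  have hfac : (0:ℝ) ≤ 1 + ε^2 / Δ^2 := by positivity
  have hκnn : 0 ≤ κ := hκ ▸ div_nonneg hNnn hμpos.le
  have hdd : d ⬝ᵥ d ≤ κ * (1 + ε^2 / Δ^2) * ε^2 := by
    have h1 : μ * (d ⬝ᵥ d) ≤ N * (1 + ε^2 / Δ^2) * ε^2 := by
      rw [hquadeq] at hquadle; nlinarith [hlb]
    rw [hκ]
    rw [div_mul_eq_mul_div, div_mul_eq_mul_div, le_div_iff₀ hμpos]
    nlinarith [h1]
  have hsym : (xk - xopt) ⬝ᵥ (xk - xopt) = d ⬝ᵥ d := by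
    have : xk - xopt = -d := by rw [hd]; ring
    rw [this, neg_dotProduct, dotProduct_neg, neg_neg]
  calc Real.sqrt ((xk - xopt) ⬝ᵥ (xk - xopt))
      ≤ Real.sqrt (κ * (1 + ε^2 / Δ^2) * ε^2) := by
        rw [hsym]; exact Real.sqrt_le_sqrt hdd
    _ = Real.sqrt (κ * (1 + ε^2 / Δ^2)) * ε := by
        rw [Real.sqrt_mul (by positivity), Real.sqrt_sq hεnn]
end

section
/- Let A_opt = A + λ_opt I be symmetric positive semidefinite, A_opt x_opt = -g, and let x_k with residual r_k = (A+λ_k I)x_k + g satisfying r_k ⊥ x_k (so that ||A_opt(x_k - x_opt)||^2 = ||r_k||^2 + (λ_opt - λ_k)^2 ||x_k||^2). Then ||r_k||^2 ≤ 2 ||A_opt|| (f(x_k) - f(x_opt)), where f(x) = (1/2)x^T A x + g^T x and ||x_k|| = ||x_opt|| = Δ. -/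
open Matrix
open scoped Matrix.Norms.L2Operator

lemma dot_eq_normsq {n : ℕ} (a : Fin n → ℝ) :
    a ⬝ᵥ a = ‖(WithLp.equiv 2 (Fin n → ℝ)).symm a‖ ^ 2 := by
  rw [← real_inner_self_eq_norm_sq]
  rw [real_inner_self_eq_norm_sq, EuclideanSpace.real_norm_sq_eq]
  simp [dotProduct, sq]

open scoped MatrixOrder in
lemma key {n : ℕ} (M : Matrix (Fin n) (Fin n) ℝ) (hM : M.PosSemidef) (v : Fin n → ℝ) :
    (M *ᵥ v) ⬝ᵥ (M *ᵥ v) ≤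
      ‖(Matrix.toEuclideanCLM (𝕜 := ℝ) M : EuclideanSpace ℝ (Fin n) →L[ℝ] EuclideanSpace ℝ (Fin n))‖ *
        (v ⬝ᵥ M *ᵥ v) := by
  rw [← Matrix.cstar_norm_def]
  set S := CFC.sqrt M with hSdef
  have hS : S.PosSemidef := (CFC.sqrt_nonneg M).posSemidef
  have hSsym : Sᴴ = S := hS.1
  have hSS : S * S = M := CFC.sqrt_mul_sqrt_self M hM.nonneg
  have hMS : ‖M‖ = ‖S‖ * ‖S‖ := by
    rw [← hSS]
    nth_rewrite 1 [← hSsym]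
    exact l2_opNorm_conjTranspose_mul_self S
  have hMv : M *ᵥ v = S *ᵥ (S *ᵥ v) := by rw [mulVec_mulVec, hSS]
  have hrhs : v ⬝ᵥ M *ᵥ v = (S *ᵥ v) ⬝ᵥ (S *ᵥ v) := by
    rw [hMv, dotProduct_mulVec]
    congr 1
    rw [← mulVec_transpose, ← S.conjTranspose_eq_transpose_of_trivial, hSsym]
  have hb : ∀ u : Fin n → ℝ, (S *ᵥ u) ⬝ᵥ (S *ᵥ u) ≤ (‖S‖ * ‖S‖) * (u ⬝ᵥ u) := by
    intro u
    have h := S.l2_opNorm_mulVec ((WithLp.equiv 2 (Fin n → ℝ)).symm u)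
    rw [dot_eq_normsq (S *ᵥ u), dot_eq_normsq u]
    have h2 : ‖((EuclideanSpace.equiv (Fin n) ℝ).symm <|
        S *ᵥ ((WithLp.equiv 2 (Fin n → ℝ)).symm u) : EuclideanSpace ℝ (Fin n))‖
        = ‖((WithLp.equiv 2 (Fin n → ℝ)).symm (S *ᵥ u) : EuclideanSpace ℝ (Fin n))‖ := rfl
    rw [h2] at h
    nlinarith [norm_nonneg ((WithLp.equiv 2 (Fin n → ℝ)).symm (S *ᵥ u) : EuclideanSpace ℝ (Fin n)),
      norm_nonneg ((WithLp.equiv 2 (Fin n → ℝ)).symm u : EuclideanSpace ℝ (Fin n))]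
  rw [hMS, hrhs, hMv]
  exact hb (S *ᵥ v)

theorem stmt5 {n : ℕ} (A : Matrix (Fin n) (Fin n) ℝ) (hA : A.IsSymm)
    (g : Fin n → ℝ) (hg : g ≠ 0) (Δ : ℝ) (hΔ : 0 < Δ) (lopt lk : ℝ)
    (xopt xk : Fin n → ℝ)
    (hpsd : (A + lopt • 1).PosSemidef)
    (heq : (A + lopt • 1).mulVec xopt = -g)
    (hxopt : Real.sqrt (xopt ⬝ᵥ xopt) = Δ)
    (hxk : Real.sqrt (xk ⬝ᵥ xk) = Δ)
    (rk : Fin n → ℝ) (hrk : rk = (A + lk • 1).mulVec xk + g)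
    (horth : rk ⬝ᵥ xk = 0)
    (hquad : ∀ x : Fin n → ℝ, Real.sqrt (x ⬝ᵥ x) = Δ →
      fobj A g x - fobj A g xopt
        = (1/2) * ((x - xopt) ⬝ᵥ (A + lopt • 1).mulVec (x - xopt))) :
    rk ⬝ᵥ rk ≤ 2 * ‖(Matrix.toEuclideanCLM (𝕜 := ℝ) (A + lopt • 1) : EuclideanSpace ℝ (Fin n) →L[ℝ] EuclideanSpace ℝ (Fin n))‖ *
      (fobj A g xk - fobj A g xopt) := by
  set B := A + lopt • 1 with hB
  have hBe : B *ᵥ (xk - xopt) = rk + (lopt - lk) • xk := by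
    have h1 : (A + lk • (1 : Matrix (Fin n) (Fin n) ℝ)) *ᵥ xk
        = B *ᵥ xk + (lk - lopt) • xk := by
      rw [hB, add_mulVec, add_mulVec, smul_mulVec, smul_mulVec, one_mulVec]
      module
    rw [mulVec_sub, heq, hrk, h1]
    module
  have hxx : (0:ℝ) ≤ xk ⬝ᵥ xk := Finset.sum_nonneg fun i _ => mul_self_nonneg _
  have hdot : (B *ᵥ (xk - xopt)) ⬝ᵥ (B *ᵥ (xk - xopt))
      = rk ⬝ᵥ rk + (lopt - lk)^2 * (xk ⬝ᵥ xk) := by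
    rw [hBe]
    rw [add_dotProduct, dotProduct_add, dotProduct_add, smul_dotProduct, smul_dotProduct,
      dotProduct_smul, dotProduct_smul, horth, dotProduct_comm xk rk, horth]
    simp [smul_eq_mul]
    ring
  have hkey := key B hpsd (xk - xopt)
  have hq := hquad xk hxk
  rw [hq]
  rw [hdot] at hkey
  set N := ‖(Matrix.toEuclideanCLM (𝕜 := ℝ) B : EuclideanSpace ℝ (Fin n) →L[ℝ] EuclideanSpace ℝ (Fin n))‖
  nlinarith [sq_nonneg (lopt - lk)]
end

section
/- Let T_k + λ_k I be symmetric tridiagonal positive definite with condition number κ_k, h_k = -||g|| (T_k+λ_k I)^{-1} e_1, and β_k > 0. Then β_k |e_k^T h_k| ≤ 2 β_k ||h_k|| ((√κ_k - 1)/(√κ_k + 1))^{k-1}. -/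
open Polynomial

private lemma two_step {P : ℕ → Prop} (h0 : P 0) (h1 : P 1)
    (hstep : ∀ n, P n → P (n + 1) → P (n + 2)) : ∀ n, P n := by
  have key : ∀ n, P n ∧ P (n + 1) := by
    intro n
    induction n with
    | zero => exact ⟨h0, h1⟩
    | succ m ih => exact ⟨ih.2, hstep m ih.1 ih.2⟩
  exact fun n => (key n).1

private lemma natDegree_T_le (n : ℕ) :
    (Polynomial.Chebyshev.T ℝ n).natDegree ≤ n := by
  induction n using two_step with
  | h0 => simp [Polynomial.Chebyshev.T_zero]
  | h1 => simp [Polynomial.Chebyshev.T_one]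
  | hstep n ih1 ih2 =>
    have : ((n : ℤ) + 2) = ((n + 2 : ℕ) : ℤ) := by push_cast; ring
    rw [show ((n + 2 : ℕ) : ℤ) = (n : ℤ) + 2 by push_cast; ring,
      Polynomial.Chebyshev.T_add_two]
    refine le_trans (natDegree_sub_le _ _) ?_
    refine max_le ?_ (le_trans ih1 (by omega))
    refine le_trans (natDegree_mul_le) ?_
    have h2X : (2 * X : ℝ[X]).natDegree ≤ 1 := by
      refine le_trans (natDegree_mul_le) ?_
      simp
    have : ((n : ℤ) + 1) = ((n + 1 : ℕ) : ℤ) := by push_cast; ring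
    rw [this]
    omega

private lemma T_eval_big (x : ℝ) (hx : 1 ≤ x) (m : ℕ) :
    (Polynomial.Chebyshev.T ℝ m).eval x
      = ((x + Real.sqrt (x ^ 2 - 1)) ^ m + (x + Real.sqrt (x ^ 2 - 1))⁻¹ ^ m) / 2 := by
  set s : ℝ := Real.sqrt (x ^ 2 - 1) with hs
  have hs0 : 0 ≤ s := Real.sqrt_nonneg _
  have hssq : s ^ 2 = x ^ 2 - 1 := Real.sq_sqrt (by nlinarith)
  set c : ℝ := x + s with hc
  have hc1 : 1 ≤ c := by nlinarith
  have hc0 : c ≠ 0 := by nlinarith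
  have hcinv : c⁻¹ = x - s := by
    field_simp
    nlinarith
  have hsum : c + c⁻¹ = 2 * x := by rw [hcinv]; ring
  induction m using two_step with
  | h0 => simp [Polynomial.Chebyshev.T_zero]
  | h1 => simp [Polynomial.Chebyshev.T_one]; rw [hcinv]; ring
  | hstep n ih1 ih2 =>
    rw [show ((n + 2 : ℕ) : ℤ) = (n : ℤ) + 2 by push_cast; ring,
      Polynomial.Chebyshev.T_add_two]
    simp only [eval_sub, eval_mul, eval_ofNat, eval_X]
    rw [show ((n : ℤ) + 1) = ((n + 1 : ℕ) : ℤ) by push_cast; ring, ih2, ih1]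
    have e1 : c ^ (n + 2) = (c + c⁻¹) * c ^ (n + 1) - c ^ n := by
      field_simp
      ring
    have e2 : c⁻¹ ^ (n + 2) = (c + c⁻¹) * c⁻¹ ^ (n + 1) - c⁻¹ ^ n := by
      have hc0' : c⁻¹ ≠ 0 := inv_ne_zero hc0
      have : c * c⁻¹ = 1 := mul_inv_cancel₀ hc0
      linear_combination (-(c⁻¹ ^ n)) * this
    rw [e1, e2, hsum]
    ring

private lemma T_eval_abs_le (y : ℝ) (hy : -1 ≤ y) (hy' : y ≤ 1) (m : ℕ) :
    |(Polynomial.Chebyshev.T ℝ m).eval y| ≤ 1 := by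
  have := Polynomial.Chebyshev.T_real_cos (Real.arccos y) (m : ℤ)
  rw [Real.cos_arccos hy hy'] at this
  rw [this]
  exact Real.abs_cos_le_one _

/-- Chebyshev min-max: a polynomial `p` with `p 0 = 1`, degree ≤ m, small on `[a,b]`. -/
private lemma cheb_poly (a b : ℝ) (ha : 0 < a) (hab : a ≤ b) (m : ℕ) (hm : 1 ≤ m) :
    ∃ p : ℝ[X], p.natDegree ≤ m ∧ p.eval 0 = 1 ∧
      ∀ x, a ≤ x → x ≤ b → |p.eval x| ≤
        2 * ((Real.sqrt (b / a) - 1) / (Real.sqrt (b / a) + 1)) ^ m := by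
  rcases eq_or_lt_of_le hab with rfl | hab'
  · -- a = b : use p = 1 - X/a, t = 0
    refine ⟨1 - Polynomial.C a⁻¹ * X, ?_, by simp, ?_⟩
    · refine le_trans (natDegree_sub_le _ _) ?_
      simp only [natDegree_one]
      refine max_le (by omega) (le_trans natDegree_mul_le ?_)
      simp; omega
    · intro x hx hx'
      have hxa : x = a := le_antisymm hx' hx
      have : Real.sqrt (a / a) = 1 := by
        rw [div_self ha.ne']; exact Real.sqrt_one
      rw [hxa, this]
      simp [ha.ne']
  · -- a < b
    set κ : ℝ := b / a with hκ
    have hκ1 : 1 < κ := (one_lt_div ha).2 hab'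
    set r : ℝ := Real.sqrt κ with hr
    have hr1 : 1 < r := by
      rw [hr, show (1:ℝ) = Real.sqrt 1 by simp]
      exact Real.sqrt_lt_sqrt (by norm_num) hκ1
    set t : ℝ := (r - 1) / (r + 1) with ht
    have ht0 : 0 < t := div_pos (by linarith) (by linarith)
    have ht1 : t < 1 := by
      rw [ht, div_lt_one (by linarith)]; linarith
    set y0 : ℝ := (a + b) / (b - a) with hy0
    have hy01 : 1 < y0 := by
      rw [hy0, lt_div_iff₀ (by linarith)]; linarith
    -- key algebra: y0 + sqrt(y0^2-1) = 1/t
    have hrsq : r ^ 2 = κ := Real.sq_sqrt (by positivity)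
    have hκab : κ * a = b := by rw [hκ]; field_simp
    have hkey : y0 + Real.sqrt (y0 ^ 2 - 1) = t⁻¹ := by
      have ha' : a ≠ 0 := ha.ne'
      have hba : (0:ℝ) < b - a := by linarith
      have hba' : b - a ≠ 0 := hba.ne'
      have hκ1' : κ - 1 ≠ 0 := ne_of_gt (by linarith)
      have h1 : y0 = (κ + 1) / (κ - 1) := by
        rw [hy0, hκ]
        field_simp
        ring
      have h2 : y0 ^ 2 - 1 = (2 * r / (κ - 1)) ^ 2 := by
        rw [h1]
        field_simp
        nlinarith [hrsq]
      rw [h2, Real.sqrt_sq (div_nonneg (by positivity) (by linarith)), h1, ht]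
      rw [inv_div, div_add_div _ _ (by nlinarith) (by nlinarith)]
      rw [div_eq_div_iff (by nlinarith) (by nlinarith)]
      nlinarith
    set q : ℝ[X] := (Polynomial.Chebyshev.T ℝ m).comp
      (Polynomial.C y0 - Polynomial.C (2 / (b - a)) * X) with hq
    have hqeval : ∀ x : ℝ, q.eval x = (Polynomial.Chebyshev.T ℝ m).eval (y0 - 2 / (b - a) * x) := by
      intro x; rw [hq, eval_comp]; simp
    have hq0 : q.eval 0 = (t⁻¹ ^ m + t ^ m) / 2 := by
      rw [hqeval]
      simp only [mul_zero, sub_zero]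
      rw [T_eval_big y0 (le_of_lt hy01) m, hkey]
      rw [inv_inv]
    have hq0pos : 0 < q.eval 0 := by rw [hq0]; positivity
    have hq0ge : t⁻¹ ^ m / 2 ≤ q.eval 0 := by
      rw [hq0]
      have : 0 ≤ t ^ m := by positivity
      linarith
    refine ⟨Polynomial.C (q.eval 0)⁻¹ * q, ?_, by simp [hq0pos.ne'], ?_⟩
    · refine le_trans natDegree_mul_le ?_
      simp only [natDegree_C, zero_add]
      refine le_trans natDegree_comp_le ?_
      have h1 : (Polynomial.C y0 - Polynomial.C (2 / (b - a)) * X : ℝ[X]).natDegree ≤ 1 := by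
        refine le_trans (natDegree_sub_le _ _) ?_
        refine max_le (by simp) (le_trans natDegree_mul_le ?_)
        simp
      calc (Polynomial.Chebyshev.T ℝ m).natDegree *
            (Polynomial.C y0 - Polynomial.C (2 / (b - a)) * X : ℝ[X]).natDegree
          ≤ m * 1 := Nat.mul_le_mul (natDegree_T_le m) h1
        _ = m := by ring
    · intro x hx hx'
      have hba : (0:ℝ) < b - a := by linarith
      have hyx : y0 - 2 / (b - a) * x = (a + b - 2 * x) / (b - a) := by
        rw [hy0]; field_simp
      have hy1 : -1 ≤ y0 - 2 / (b - a) * x := by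
        rw [hyx]; exact (le_div_iff₀ hba).2 (by linarith)
      have hy2 : y0 - 2 / (b - a) * x ≤ 1 := by
        rw [hyx]; exact (div_le_one hba).2 (by linarith)
      have hqx : |q.eval x| ≤ 1 := by
        rw [hqeval]
        exact T_eval_abs_le _ hy1 hy2 m
      have hinv : (q.eval 0)⁻¹ ≤ 2 * t ^ m := by
        have h1 : (0:ℝ) < t⁻¹ ^ m / 2 := by positivity
        have := inv_anti₀ h1 hq0ge
        calc (q.eval 0)⁻¹ ≤ (t⁻¹ ^ m / 2)⁻¹ := this
          _ = 2 * t ^ m := by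
            rw [inv_pow, inv_div, div_eq_mul_inv, inv_inv]
      rw [eval_mul, eval_C, abs_mul, abs_of_nonneg (inv_nonneg.2 hq0pos.le)]
      calc (q.eval 0)⁻¹ * |q.eval x| ≤ (2 * t ^ m) * 1 :=
            mul_le_mul hinv hqx (abs_nonneg _) (by positivity)
        _ = 2 * t ^ m := by ring
open Matrix Polynomial

private lemma banded_pow {k : ℕ} (A : Matrix (Fin k) (Fin k) ℝ)
    (hA : ∀ i j : Fin k, ((i:ℕ) + 1 < (j:ℕ) ∨ (j:ℕ) + 1 < (i:ℕ)) → A i j = 0) :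
    ∀ (n : ℕ) (i j : Fin k), (n : ℕ) + (j : ℕ) < (i : ℕ) → (A ^ n) i j = 0 := by
  intro n
  induction n with
  | zero =>
    intro i j hij
    rw [pow_zero]
    exact Matrix.one_apply_ne (by intro hcon; rw [hcon] at hij; omega)
  | succ n ih =>
    intro i j hij
    rw [pow_succ, Matrix.mul_apply]
    refine Finset.sum_eq_zero fun m _ => ?_
    by_cases hm : (n : ℕ) + (m : ℕ) < (i : ℕ)
    · rw [ih i m hm, zero_mul]
    · rw [hA m j (Or.inr (by omega)), mul_zero]

private lemma aeval_conj {k : ℕ} (V D : Matrix (Fin k) (Fin k) ℝ)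
    (hV : star V * V = 1) (p : ℝ[X]) :
    Polynomial.aeval (V * D * star V) p = V * (Polynomial.aeval D p) * star V := by
  have hV' : V * star V = 1 := mul_eq_one_comm.mp hV
  have hpow : ∀ n : ℕ, (V * D * star V) ^ n = V * D ^ n * star V := by
    intro n
    induction n with
    | zero => simp [pow_zero, Matrix.mul_one, hV']
    | succ n ih =>
      rw [pow_succ, pow_succ, ih]
      calc V * D ^ n * star V * (V * D * star V)
          = V * D ^ n * (star V * V) * D * star V := by
            simp only [Matrix.mul_assoc]
        _ = V * (D ^ n * D) * star V := by rw [hV]; simp only [Matrix.mul_assoc, Matrix.mul_one]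
        _ = V * (D ^ n * D) * star V := rfl
  induction p using Polynomial.induction_on' with
  | add p q hp hq => rw [map_add, map_add, hp, hq, Matrix.mul_add, Matrix.add_mul]
  | monomial n a =>
    rw [aeval_monomial, aeval_monomial, hpow]
    have : (algebraMap ℝ (Matrix (Fin k) (Fin k) ℝ)) a = a • (1 : Matrix (Fin k) (Fin k) ℝ) := by
      simp [Algebra.algebraMap_eq_smul_one]
    rw [this]
    rw [smul_mul_assoc, one_mul, smul_mul_assoc, one_mul, Matrix.mul_smul, Matrix.smul_mul]

private lemma aeval_diagonal {k : ℕ} (d : Fin k → ℝ) (p : ℝ[X]) :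
    Polynomial.aeval (Matrix.diagonal d) p
      = Matrix.diagonal (fun i => p.eval (d i)) := by
  have h1 := Polynomial.aeval_algHom_apply (Matrix.diagonalAlgHom (n := Fin k) (α := ℝ) ℝ) d p
  simp only [Matrix.diagonalAlgHom_apply] at h1
  rw [h1]
  have h3 : (Polynomial.aeval d) p = fun i => p.eval (d i) := by
    funext i
    have h2 := Polynomial.aeval_algHom_apply (Pi.evalAlgHom ℝ (fun _ : Fin k => ℝ) i) d p
    simp only [Pi.evalAlgHom_apply] at h2
    rw [← h2, Polynomial.aeval_def, Polynomial.eval₂_eq_eval_map]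
    simp [Polynomial.map_id, Algebra.algebraMap_self]
  rw [h3]
open Matrix Polynomial

private lemma orth_mulVec_dot {k : ℕ} (W : Matrix (Fin k) (Fin k) ℝ)
    (hW : Wᵀ * W = 1) (x : Fin k → ℝ) :
    (W *ᵥ x) ⬝ᵥ (W *ᵥ x) = x ⬝ᵥ x := by
  rw [Matrix.dotProduct_mulVec, ← Matrix.mulVec_transpose, Matrix.mulVec_mulVec, hW, one_mulVec]

private lemma diag_dot_bound {k : ℕ} (e : Fin k → ℝ) (M : ℝ)
    (hM : ∀ i, |e i| ≤ M) (w : Fin k → ℝ) :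
    (Matrix.diagonal e *ᵥ w) ⬝ᵥ (Matrix.diagonal e *ᵥ w) ≤ M ^ 2 * (w ⬝ᵥ w) := by
  simp only [Matrix.mulVec_diagonal, dotProduct, Finset.mul_sum]
  refine Finset.sum_le_sum fun i _ => ?_
  have h1 : (e i) ^ 2 ≤ M ^ 2 := sq_le_sq' (by have := hM i; have := abs_nonneg (e i); linarith [neg_abs_le (e i)]) (le_trans (le_abs_self _) (hM i))
  nlinarith [sq_nonneg (w i), sq_nonneg (e i * w i)]

private lemma entry_le_sqrt_dot {k : ℕ} (x : Fin k → ℝ) (i : Fin k) :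
    |x i| ≤ Real.sqrt (x ⬝ᵥ x) := by
  rw [← Real.sqrt_sq_eq_abs]
  apply Real.sqrt_le_sqrt
  rw [dotProduct]
  have : x i ^ 2 = x i * x i := sq (x i) ▸ rfl
  calc x i ^ 2 = x i * x i := by ring
    _ ≤ ∑ j, x j * x j := Finset.single_le_sum (f := fun j => x j * x j)
        (fun j _ => mul_self_nonneg _) (Finset.mem_univ i)

theorem stmt8 {k : ℕ} (hk : 2 ≤ k)
    (T : Matrix (Fin k) (Fin k) ℝ) (hT : T.IsSymm)
    (htri : ∀ i j : Fin k, ((i:ℕ) + 1 < (j:ℕ) ∨ (j:ℕ) + 1 < (i:ℕ)) → T i j = 0)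
    (lk : ℝ) (hlk : 0 ≤ lk)
    (hpd : (T + lk • 1).PosDef)
    (κk : ℝ) (hκ : κk = (⨆ i, hpd.1.eigenvalues i) / (⨅ i, hpd.1.eigenvalues i))
    (gn : ℝ) (hgn : 0 ≤ gn)
    (h : Fin k → ℝ)
    (hh : h = -(gn • (T + lk • 1)⁻¹.mulVec (Pi.single (⟨0, by omega⟩ : Fin k) 1)))
    (β : ℝ) (hβ : 0 < β) :
    β * |(Pi.single (⟨k-1, by omega⟩ : Fin k) (1:ℝ)) ⬝ᵥ h| ≤
      2 * β * Real.sqrt (h ⬝ᵥ h) *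
        ((Real.sqrt κk - 1) / (Real.sqrt κk + 1))^(k-1) := by
  haveI : Nonempty (Fin k) := ⟨⟨0, by omega⟩⟩
  set A := T + lk • 1 with hA_def
  have hA : A.IsHermitian := hpd.1
  set μ : Fin k → ℝ := hA.eigenvalues with hμ
  obtain ⟨i0, hi0⟩ := Finite.exists_min μ
  obtain ⟨i1, hi1⟩ := Finite.exists_max μ
  set a := μ i0 with ha_def
  set b := μ i1 with hb_def
  have hiInf : (⨅ i, hpd.1.eigenvalues i) = a :=
    le_antisymm (ciInf_le (Finite.bddBelow_range μ) i0) (le_ciInf hi0)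
  have hiSup : (⨆ i, hpd.1.eigenvalues i) = b :=
    le_antisymm (ciSup_le hi1) (le_ciSup (Finite.bddAbove_range μ) i1)
  have ha : 0 < a := hpd.eigenvalues_pos i0
  have hab : a ≤ b := hi0 i1
  have hκab : κk = b / a := by rw [hκ, hiSup, hiInf]
  set m := k - 1 with hm_def
  have hm : 1 ≤ m := by omega
  obtain ⟨p, hdeg, hp0, hpb⟩ := cheb_poly a b ha hab m hm
  set t := (Real.sqrt κk - 1) / (Real.sqrt κk + 1) with ht
  have hpb' : ∀ i, |p.eval (μ i)| ≤ 2 * t ^ m := by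
    intro i
    rw [ht, hκab]
    exact hpb (μ i) (hi0 i) (hi1 i)
  have ht0 : 0 ≤ t := by
    have h1 : (1:ℝ) ≤ Real.sqrt κk := by
      rw [hκab, show (1:ℝ) = Real.sqrt 1 by simp]
      apply Real.sqrt_le_sqrt
      rw [le_div_iff₀ ha]; linarith
    rw [ht]
    apply div_nonneg <;> linarith
  -- A is tridiagonal
  have htriA : ∀ i j : Fin k, ((i:ℕ) + 1 < (j:ℕ) ∨ (j:ℕ) + 1 < (i:ℕ)) → A i j = 0 := by
    intro i j hij
    have hne : i ≠ j := by
      intro hcon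
      rw [hcon] at hij
      omega
    simp [hA_def, Matrix.add_apply, htri i j hij, Matrix.smul_apply, Matrix.one_apply_ne hne]
  set ik : Fin k := ⟨k-1, by omega⟩ with hik
  set iz : Fin k := ⟨0, by omega⟩ with hiz
  -- A *ᵥ h
  have hdet : IsUnit A.det := isUnit_iff_ne_zero.2 (ne_of_gt hpd.det_pos)
  have hAinv : A * A⁻¹ = 1 := Matrix.mul_nonsing_inv A hdet
  have hAh : A *ᵥ h = -(gn • (Pi.single iz 1 : Fin k → ℝ)) := by
    rw [hh]
    rw [Matrix.mulVec_neg, Matrix.mulVec_smul, Matrix.mulVec_mulVec, hAinv, Matrix.one_mulVec]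
  -- ψ
  set ψ := p.divX with hψdef
  have hψ : p = ψ * X + 1 := by
    have h1 := Polynomial.X_mul_divX_add p
    rw [Polynomial.coeff_zero_eq_eval_zero, hp0, Polynomial.C_1] at h1
    rw [← h1]; ring
  have hψdeg : ψ.natDegree ≤ k - 2 := by
    have h1 := Polynomial.natDegree_divX_eq_natDegree_tsub_one (p := p)
    rw [← hψdef] at h1
    omega
  have hband := banded_pow A htriA
  have hψA0 : (Polynomial.aeval A ψ) ik iz = 0 := by
    rw [Polynomial.aeval_eq_sum_range, Matrix.sum_apply]
    refine Finset.sum_eq_zero fun n hn => ?_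
    rw [Finset.mem_range] at hn
    rw [Matrix.smul_apply, hband n ik iz (by simp [hik, hiz]; omega), smul_zero]
  have hsplit : (Polynomial.aeval A) p = (Polynomial.aeval A) ψ * A + 1 := by
    conv_lhs => rw [hψ]
    rw [map_add, _root_.map_mul, Polynomial.aeval_X, _root_.map_one]
  have hcomp : ((Polynomial.aeval A p) *ᵥ h) ik = h ik := by
    rw [hsplit, Matrix.add_mulVec, Matrix.one_mulVec, ← Matrix.mulVec_mulVec, hAh]
    simp only [Pi.add_apply, Matrix.mulVec_neg, Matrix.mulVec_smul, Matrix.mulVec_single,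
      Pi.neg_apply, Pi.smul_apply, mul_one, smul_eq_mul]
    rw [Matrix.col_apply, hψA0, smul_zero]
    ring
  -- spectral decomposition
  set V : Matrix (Fin k) (Fin k) ℝ := (hA.eigenvectorUnitary : Matrix (Fin k) (Fin k) ℝ) with hV
  have hVu : star V * V = 1 := by
    rw [hV]
    exact Unitary.coe_star_mul_self hA.eigenvectorUnitary
  have hstar : star V = Vᵀ := by
    rw [Matrix.star_eq_conjTranspose]
    ext i j
    simp [Matrix.conjTranspose_apply]
  have hspec : A = V * Matrix.diagonal μ * star V := by
    have h1 := hA.spectral_theorem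
    simpa using h1
  have haevalA : Polynomial.aeval A p
      = V * Matrix.diagonal (fun i => p.eval (μ i)) * star V := by
    conv_lhs => rw [hspec]
    rw [aeval_conj V _ hVu, aeval_diagonal]
  -- norm bound
  set d := (Polynomial.aeval A p) *ᵥ h with hd
  have hWt : Vᵀ * V = 1 := by rw [← hstar]; exact hVu
  have hWt' : V * Vᵀ = 1 := mul_eq_one_comm.mp hWt
  have hw : (Vᵀ *ᵥ h) ⬝ᵥ (Vᵀ *ᵥ h) = h ⬝ᵥ h :=
    orth_mulVec_dot Vᵀ (by rw [Matrix.transpose_transpose]; exact hWt') h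
  have hdd : d ⬝ᵥ d ≤ (2 * t ^ m) ^ 2 * (h ⬝ᵥ h) := by
    rw [hd, haevalA, hstar, ← Matrix.mulVec_mulVec, ← Matrix.mulVec_mulVec]
    rw [orth_mulVec_dot V hWt]
    calc (Matrix.diagonal (fun i => p.eval (μ i)) *ᵥ (Vᵀ *ᵥ h)) ⬝ᵥ
          (Matrix.diagonal (fun i => p.eval (μ i)) *ᵥ (Vᵀ *ᵥ h))
        ≤ (2 * t ^ m) ^ 2 * ((Vᵀ *ᵥ h) ⬝ᵥ (Vᵀ *ᵥ h)) :=
          diag_dot_bound _ _ hpb' _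
      _ = (2 * t ^ m) ^ 2 * (h ⬝ᵥ h) := by rw [hw]
  have hdd0 : (0:ℝ) ≤ h ⬝ᵥ h := by
    rw [dotProduct]
    exact Finset.sum_nonneg fun i _ => mul_self_nonneg _
  have hfin : |h ik| ≤ 2 * t ^ m * Real.sqrt (h ⬝ᵥ h) := by
    calc |h ik| = |d ik| := by rw [hcomp]
      _ ≤ Real.sqrt (d ⬝ᵥ d) := entry_le_sqrt_dot d ik
      _ ≤ Real.sqrt ((2 * t ^ m) ^ 2 * (h ⬝ᵥ h)) := Real.sqrt_le_sqrt hdd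
      _ = 2 * t ^ m * Real.sqrt (h ⬝ᵥ h) := by
          rw [Real.sqrt_mul (sq_nonneg _), Real.sqrt_sq (by positivity)]
  have hsingle : (Pi.single (⟨k-1, by omega⟩ : Fin k) (1:ℝ)) ⬝ᵥ h = h ik := by
    rw [single_dotProduct, one_mul]
  rw [hsingle]
  calc β * |h ik| ≤ β * (2 * t ^ m * Real.sqrt (h ⬝ᵥ h)) :=
        mul_le_mul_of_nonneg_left hfin hβ.le
    _ = 2 * β * Real.sqrt (h ⬝ᵥ h) * t ^ (k - 1) := by rw [hm_def]; ring
end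

section
/- Suppose the TRS is in the easy case with ||x_opt|| = Δ, i.e., A + λ_opt I ≻ 0, (A+λ_opt I)x_opt = -g, g ≠ 0. Then λ_opt is a simple eigenvalue of the matrix M = [[-A, gg^T/Δ^2],[I, -A]]: the derivative of det(M-λI) at λ = λ_opt is nonzero. -/
open Matrix

attribute [local instance] Matrix.linftyOpNormedRing Matrix.linftyOpNormedAlgebra

/-- The continuous linear map `N ↦ g ⬝ᵥ (N *ᵥ g)`. -/
noncomputable def quadCLM {n : ℕ} (g : Fin n → ℝ) :
    Matrix (Fin n) (Fin n) ℝ →L[ℝ] ℝ :=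
  LinearMap.toContinuousLinearMap
    { toFun := fun N => g ⬝ᵥ (N *ᵥ g)
      map_add' := fun N₁ N₂ => by simp [Matrix.add_mulVec, dotProduct_add]
      map_smul' := fun r N => by
        simp [Matrix.smul_mulVec, dotProduct_smul] }

lemma quadCLM_apply {n : ℕ} (g : Fin n → ℝ) (N : Matrix (Fin n) (Fin n) ℝ) :
    quadCLM g N = g ⬝ᵥ (N *ᵥ g) := rfl

lemma exists_hasDerivAt_det_affine {n : ℕ} (A : Matrix (Fin n) (Fin n) ℝ) (x : ℝ) :
    ∃ d', HasDerivAt (fun l : ℝ => (A + l • (1 : Matrix (Fin n) (Fin n) ℝ)).det) d' x := by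
  classical
  set p : Polynomial ℝ :=
    (A.map Polynomial.C + (Polynomial.X : Polynomial ℝ) • 1).det with hp
  refine ⟨p.derivative.eval x, ?_⟩
  have h : ∀ l : ℝ, (A + l • (1 : Matrix (Fin n) (Fin n) ℝ)).det = p.eval l := by
    intro l
    have h2 : (Polynomial.evalRingHom l).mapMatrix
        (A.map Polynomial.C + (Polynomial.X : Polynomial ℝ) • 1) = A + l • 1 := by
      ext i j
      simp [Matrix.one_apply, Matrix.add_apply, Matrix.smul_apply, Matrix.map_apply,
        smul_eq_mul, apply_ite (Polynomial.eval l)]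
    calc (A + l • (1 : Matrix (Fin n) (Fin n) ℝ)).det
        = ((Polynomial.evalRingHom l).mapMatrix
            (A.map Polynomial.C + (Polynomial.X : Polynomial ℝ) • 1)).det := by rw [h2]
      _ = p.eval l := by rw [← RingHom.map_det]; rfl
  simp only [h]
  exact p.hasDerivAt x

theorem stmt10 {n : ℕ} (A : Matrix (Fin n) (Fin n) ℝ) (hA : A.IsSymm)
    (g : Fin n → ℝ) (hg : g ≠ 0) (Δ : ℝ) (hΔ : 0 < Δ)
    (lopt : ℝ) (hlopt : 0 ≤ lopt)
    (hpd : (A + lopt • 1).PosDef)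
    (xopt : Fin n → ℝ) (heq : (A + lopt • 1).mulVec xopt = -g)
    (hxn : Real.sqrt (xopt ⬝ᵥ xopt) = Δ)
    (M : Matrix (Fin n ⊕ Fin n) (Fin n ⊕ Fin n) ℝ)
    (hM : M = Matrix.fromBlocks (-A) ((Δ^2)⁻¹ • Matrix.vecMulVec g g) 1 (-A)) :
    deriv (fun l : ℝ => (M - l • 1).det) lopt ≠ 0 := by
  classical
  set c : ℝ := (Δ ^ 2)⁻¹ with hc
  have hBsymm : ∀ l : ℝ, (A + l • (1 : Matrix (Fin n) (Fin n) ℝ))ᵀ = A + l • 1 := by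
    intro l; rw [transpose_add, transpose_smul, transpose_one, hA]
  set B : Matrix (Fin n) (Fin n) ℝ := A + lopt • 1 with hB
  have hdetB : IsUnit B.det := hpd.det_pos.ne'.isUnit
  -- the key determinant identity, valid whenever `A + l • 1` is invertible
  have key : ∀ l : ℝ, IsUnit (A + l • (1 : Matrix (Fin n) (Fin n) ℝ)).det →
      (M - l • 1).det
        = (A + l • (1 : Matrix (Fin n) (Fin n) ℝ)).det ^ 2 *
          (1 - c * quadCLM g (Ring.inverse (A + l • 1) * Ring.inverse (A + l • 1))) := by
    intro l hl
    set Bl : Matrix (Fin n) (Fin n) ℝ := A + l • 1 with hBl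
    have hinv : Ring.inverse Bl = Bl⁻¹ := (Matrix.nonsing_inv_eq_ringInverse Bl).symm
    have hBlsymm : Bl⁻¹ᵀ = Bl⁻¹ := by
      rw [Matrix.transpose_nonsing_inv, hBl, hBsymm l]
    set w : Fin n → ℝ := Bl⁻¹ *ᵥ g with hw
    have hvm : g ᵥ* Bl⁻¹ = w := by rw [← Matrix.mulVec_transpose, hBlsymm, hw]
    have hblock : M - l • 1 = fromBlocks (-Bl) (c • vecMulVec g g) 1 (-Bl) := by
      subst hM
      ext i j
      rcases i with i | i <;> rcases j with j | j <;>
        simp [hBl, Matrix.one_apply, Matrix.sub_apply, Matrix.smul_apply, Matrix.add_apply,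
          Matrix.neg_apply, smul_eq_mul, Sum.inl.injEq, Sum.inr.injEq] <;>
      · split_ifs <;> ring
    haveI : Invertible Bl := Bl.invertibleOfIsUnitDet hl
    haveI : Invertible (-Bl) := invertibleNeg Bl
    have hneginv : (-Bl)⁻¹ = -(Bl⁻¹) :=
      Matrix.inv_eq_right_inv (by rw [neg_mul_neg, Matrix.mul_nonsing_inv _ hl])
    have hinvOf : ⅟(-Bl) = -(Bl⁻¹) := by
      rw [Matrix.invOf_eq_nonsing_inv, hneginv]
    have hdet2 := Matrix.det_fromBlocks₂₂ (-Bl) (c • vecMulVec g g)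
      (1 : Matrix (Fin n) (Fin n) ℝ) (-Bl)
    rw [hblock, hdet2, hinvOf]
    have e1 : (-Bl) - (c • vecMulVec g g) * (-(Bl⁻¹)) * 1
        = -(Bl - c • (vecMulVec g g * Bl⁻¹)) := by
      rw [Matrix.mul_one, Matrix.mul_neg, sub_neg_eq_add, Matrix.smul_mul]
      abel
    rw [e1, Matrix.det_neg, Matrix.det_neg, mul_mul_mul_comm, ← mul_pow, neg_mul_neg,
      one_mul, one_pow, one_mul]
    have e2 : Bl - c • (vecMulVec g g * Bl⁻¹)
        = Bl * ((1 : Matrix (Fin n) (Fin n) ℝ) - c • (Bl⁻¹ * vecMulVec g g * Bl⁻¹)) := by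
      rw [Matrix.mul_sub, Matrix.mul_one, Matrix.mul_smul]
      congr 2
      rw [← Matrix.mul_assoc, ← Matrix.mul_assoc, Matrix.mul_nonsing_inv _ hl,
        Matrix.one_mul]
    have e3 : Bl⁻¹ * vecMulVec g g * Bl⁻¹ = vecMulVec w w := by
      rw [vecMulVec_eq Unit g g, Matrix.mul_assoc, Matrix.mul_assoc,
        ← Matrix.replicateRow_vecMul, hvm, ← Matrix.mul_assoc, ← Matrix.replicateCol_mulVec, ← hw,
        ← vecMulVec_eq Unit w w]
    have e4 : (1 : Matrix (Fin n) (Fin n) ℝ) - c • vecMulVec w w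
        = 1 + Matrix.replicateCol Unit ((-c) • w) * Matrix.replicateRow Unit w := by
      rw [← vecMulVec_eq Unit ((-c) • w) w]
      ext i j
      simp only [Matrix.vecMulVec_apply, Matrix.add_apply, Matrix.sub_apply,
        Matrix.smul_apply, Pi.smul_apply, smul_eq_mul]
      ring
    have e5 : quadCLM g (Ring.inverse Bl * Ring.inverse Bl) = w ⬝ᵥ w := by
      rw [hinv, quadCLM_apply, ← Matrix.mulVec_mulVec, ← hw, Matrix.dotProduct_mulVec, hvm]
    rw [e2, Matrix.det_mul, e3, e4, Matrix.det_one_add_replicateCol_mul_replicateRow, e5, dotProduct_smul]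
    simp only [smul_eq_mul]
    ring
  -- basic facts at `lopt`
  have hxx : xopt ⬝ᵥ xopt = Δ ^ 2 := by
    have h0 : 0 ≤ xopt ⬝ᵥ xopt := Finset.sum_nonneg fun i _ => mul_self_nonneg _
    rw [← hxn, Real.sq_sqrt h0]
  have hx0 : xopt ≠ 0 := by
    rintro rfl
    simp [dotProduct] at hxx
    nlinarith
  have hwg : B⁻¹ *ᵥ g = -xopt := by
    have h1 : B⁻¹ *ᵥ (B *ᵥ xopt) = xopt := by
      rw [Matrix.mulVec_mulVec, Matrix.nonsing_inv_mul _ hdetB, Matrix.one_mulVec]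
    rw [heq, Matrix.mulVec_neg] at h1
    exact neg_eq_iff_eq_neg.mp h1
  have hBinvT : B⁻¹ᵀ = B⁻¹ := by rw [Matrix.transpose_nonsing_inv, hB, hBsymm]
  have hvmB : g ᵥ* B⁻¹ = -xopt := by rw [← Matrix.mulVec_transpose, hBinvT, hwg]
  have hu : IsUnit B := (Matrix.isUnit_iff_isUnit_det B).mpr hdetB
  -- derivative computations
  have hBf : HasDerivAt (fun l : ℝ => A + l • (1 : Matrix (Fin n) (Fin n) ℝ))
      (1 : Matrix (Fin n) (Fin n) ℝ) lopt := by
    have h := ((hasDerivAt_id lopt).smul_const (1 : Matrix (Fin n) (Fin n) ℝ)).const_add A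
    simp only [id, one_smul] at h
    exact h
  have hcoe : ((hu.unit⁻¹ : (Matrix (Fin n) (Fin n) ℝ)ˣ) : Matrix (Fin n) (Fin n) ℝ)
      = B⁻¹ := by rw [Matrix.coe_units_inv, hu.unit_spec]
  have hinvB : HasDerivAt (fun l : ℝ => Ring.inverse (A + l • (1 : Matrix (Fin n) (Fin n) ℝ)))
      (-(B⁻¹ * B⁻¹)) lopt := by
    have h0 : HasFDerivAt Ring.inverse
        (-(ContinuousLinearMap.mulLeftRight ℝ (Matrix (Fin n) (Fin n) ℝ)
          ↑hu.unit⁻¹ ↑hu.unit⁻¹)) (A + lopt • (1 : Matrix (Fin n) (Fin n) ℝ)) := by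
      have h := hasFDerivAt_ringInverse (𝕜 := ℝ) hu.unit
      rw [hu.unit_spec] at h
      exact h
    have h1 := h0.comp_hasDerivAt (x := lopt) hBf
    simp [hcoe, Function.comp] at h1
    exact h1
  have hrB : Ring.inverse B = B⁻¹ := (Matrix.nonsing_inv_eq_ringInverse B).symm
  have hk : HasDerivAt (fun l : ℝ =>
        Ring.inverse (A + l • (1 : Matrix (Fin n) (Fin n) ℝ)) * Ring.inverse (A + l • 1))
      (-(B⁻¹ * B⁻¹) * Ring.inverse B + Ring.inverse B * -(B⁻¹ * B⁻¹)) lopt :=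
    hinvB.mul hinvB
  rw [hrB] at hk
  have hψ : HasDerivAt
      (fun l : ℝ => c * quadCLM g (Ring.inverse (A + l • 1) * Ring.inverse (A + l • 1)))
      (c * quadCLM g (-(B⁻¹ * B⁻¹) * B⁻¹ + B⁻¹ * -(B⁻¹ * B⁻¹))) lopt := by
    have h2 := ((quadCLM g).hasFDerivAt.comp_hasDerivAt (x := lopt) hk).const_mul c
    exact h2
  obtain ⟨d', hd'⟩ := exists_hasDerivAt_det_affine A lopt
  have hF := (hd'.pow 2).mul (hψ.const_sub 1)
  -- eventual equality and the value of the derivative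
  have hne : ∀ᶠ l in nhds lopt, IsUnit (A + l • (1 : Matrix (Fin n) (Fin n) ℝ)).det := by
    have h3 : (fun l : ℝ => (A + l • (1 : Matrix (Fin n) (Fin n) ℝ)).det) lopt ≠ 0 := by
      simpa [← hB] using hpd.det_pos.ne'
    filter_upwards [hd'.continuousAt.eventually_ne h3] with l hl using
      isUnit_iff_ne_zero.mpr hl
  have hev : (fun l : ℝ => (M - l • 1).det) =ᶠ[nhds lopt]
      (fun l : ℝ => (A + l • (1 : Matrix (Fin n) (Fin n) ℝ)).det ^ 2 *
        (1 - c * quadCLM g (Ring.inverse (A + l • 1) * Ring.inverse (A + l • 1)))) := by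
    filter_upwards [hne] with l hl using key l hl
  have hderiv : deriv (fun l : ℝ => (M - l • 1).det) lopt
      = (2 * (A + lopt • (1 : Matrix (Fin n) (Fin n) ℝ)).det ^ (2 - 1) * d') *
          (1 - c * quadCLM g (Ring.inverse (A + lopt • 1) * Ring.inverse (A + lopt • 1)))
        + (A + lopt • (1 : Matrix (Fin n) (Fin n) ℝ)).det ^ 2 *
          (-(c * quadCLM g (-(B⁻¹ * B⁻¹) * B⁻¹ + B⁻¹ * -(B⁻¹ * B⁻¹)))) := by
    rw [hev.deriv_eq]
    exact hF.deriv
  -- the two quadratic form values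
  have hq1 : quadCLM g (B⁻¹ * B⁻¹) = Δ ^ 2 := by
    rw [quadCLM_apply, ← Matrix.mulVec_mulVec, hwg, Matrix.mulVec_neg, dotProduct_neg,
      Matrix.dotProduct_mulVec, hvmB, neg_dotProduct, neg_neg, hxx]
  have e6 : -(B⁻¹ * B⁻¹) * B⁻¹ + B⁻¹ * -(B⁻¹ * B⁻¹) = (-2 : ℝ) • (B⁻¹ * B⁻¹ * B⁻¹) := by
    rw [Matrix.neg_mul, Matrix.mul_neg, ← Matrix.mul_assoc]
    ext i j
    simp only [Matrix.add_apply, Matrix.neg_apply, Matrix.smul_apply, smul_eq_mul]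
    ring
  have e7 : quadCLM g (B⁻¹ * B⁻¹ * B⁻¹) = xopt ⬝ᵥ (B⁻¹ *ᵥ xopt) := by
    rw [quadCLM_apply, ← Matrix.mulVec_mulVec, ← Matrix.mulVec_mulVec, hwg,
      Matrix.mulVec_neg, Matrix.mulVec_neg, dotProduct_neg,
      Matrix.dotProduct_mulVec, hvmB, neg_dotProduct, neg_neg]
  have hq2 : quadCLM g (-(B⁻¹ * B⁻¹) * B⁻¹ + B⁻¹ * -(B⁻¹ * B⁻¹))
      = -(2 * (xopt ⬝ᵥ (B⁻¹ *ᵥ xopt))) := by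
    rw [e6, _root_.map_smul, e7, smul_eq_mul]
    ring
  have hpos : 0 < xopt ⬝ᵥ (B⁻¹ *ᵥ xopt) := by
    have h := (hpd.inv).dotProduct_mulVec_pos hx0
    simpa using h
  have hcpos : 0 < c := by rw [hc]; positivity
  have hone : c * Δ ^ 2 = 1 := by rw [hc]; field_simp
  rw [hderiv, ← hB, hrB, hq1, hq2, hone]
  have hpos2 : 0 < B.det ^ 2 * (c * (2 * (xopt ⬝ᵥ (B⁻¹ *ᵥ xopt)))) :=
    mul_pos (pow_pos hpd.det_pos 2) (mul_pos hcpos (by linarith))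
  have : (2 * B.det ^ (2 - 1) * d') * (1 - 1)
      + B.det ^ 2 * (-(-(2 * (xopt ⬝ᵥ (B⁻¹ *ᵥ xopt))) * c)) ≠ 0 := by nlinarith
  calc (2 * B.det ^ (2 - 1) * d') * (1 - 1)
      + B.det ^ 2 * (-(c * -(2 * (xopt ⬝ᵥ (B⁻¹ *ᵥ xopt)))))
      = B.det ^ 2 * (c * (2 * (xopt ⬝ᵥ (B⁻¹ *ᵥ xopt)))) := by ring
    _ ≠ 0 := hpos2.ne'
end

section
/- If the TRS is in the hard case (λ_opt = -α_n, g ⊥ null(A - α_n I), and the multiplicity of α_n is s ≥ 1), then det(M - λI) = (α_n + λ)^{2s} · [∏_{i=1}^{n-s}(α_i+λ)^2 · (1 - ||p(λ)||^2/Δ^2)] where p(λ) = -Σ_{i=1}^{n-s} (u_i^T g / (α_i+λ)) u_i, so λ_opt is a multiple eigenvalue of M. -/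
open Matrix

lemma aux_mul_vecMulVec_mul {m : Type*} [Fintype m] (P Q : Matrix m m ℝ) (a b : m → ℝ) :
    P * vecMulVec a b * Q = vecMulVec (P *ᵥ a) (Qᵀ *ᵥ b) := by
  ext i j
  simp only [mul_apply, vecMulVec_apply, mulVec, dotProduct, transpose_apply,
    Finset.sum_mul, Finset.mul_sum]
  exact Finset.sum_congr rfl fun x _ => Finset.sum_congr rfl fun y _ => by ring

lemma aux_det_diag_sub {m : Type*} [Fintype m] [DecidableEq m] (d h : m → ℝ) (c : ℝ)
    (hd : ∀ i, d i ≠ 0) :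
    (Matrix.diagonal d - c • vecMulVec h h).det
      = (∏ i, d i) * (1 - c * ∑ i, h i * h i / d i) := by
  have hfac : Matrix.diagonal d - c • vecMulVec h h
      = Matrix.diagonal d * (1 + replicateCol (Fin 1) (fun i => -(c * h i / d i)) * replicateRow (Fin 1) h) := by
    rw [mul_add, mul_one, show replicateCol (Fin 1) (fun i => -(c * h i / d i)) * replicateRow (Fin 1) h
      = vecMulVec (fun i => -(c * h i / d i)) h from (vecMulVec_eq (Fin 1) _ _).symm]
    ext i j
    simp only [Matrix.add_apply, Matrix.sub_apply, diagonal_mul, vecMulVec_apply, Matrix.smul_apply, smul_eq_mul]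
    field_simp
    rw [mul_div_assoc, div_self (hd i), mul_one]
    ring
  have hdet : Matrix.det (1 + replicateCol (Fin 1) (fun i => -(c * h i / d i)) * replicateRow (Fin 1) h)
      = 1 + h ⬝ᵥ (fun i => -(c * h i / d i)) := det_one_add_replicateCol_mul_replicateRow _ _
  rw [hfac, det_mul, hdet, det_diagonal]
  congr 1
  rw [sub_eq_add_neg]
  congr 1
  simp only [dotProduct, Finset.mul_sum, neg_eq_iff_eq_neg, ← Finset.sum_neg_distrib]
  exact Finset.sum_congr rfl fun x _ => by ring

lemma aux_det_fromBlocks_self {m : Type*} [Fintype m] [DecidableEq m]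
    (X B : Matrix m m ℝ) (hX : IsUnit X.det) :
    (fromBlocks X B 1 X).det = (X * X - B).det := by
  haveI := X.invertibleOfIsUnitDet hX
  rw [det_fromBlocks₂₂, invOf_eq_nonsing_inv, Matrix.mul_one]
  have h1 : X - B * X⁻¹ = (X * X - B) * X⁻¹ := by
    rw [sub_mul, mul_assoc, mul_nonsing_inv _ hX, Matrix.mul_one]
  rw [h1, det_mul, det_nonsing_inv, mul_comm X.det, mul_assoc,
    Ring.inverse_mul_cancel _ hX, mul_one]

lemma aux_card_filter (n k : ℕ) (hk : k ≤ n) :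
    (Finset.univ.filter (fun i : Fin n => (i:ℕ) < k)).card = k := by
  have h1 : (Finset.univ.filter (fun i : Fin n => (i:ℕ) < k)).card
      = ((Finset.Iio n).filter (fun i => i < k)).card := by
    rw [← Fin.map_valEmbedding_univ, Finset.filter_map, Finset.card_map]
    rfl
  have h2 : (Finset.Iio n).filter (fun i => i < k) = Finset.range k := by
    ext x; simp only [Finset.mem_filter, Finset.mem_Iio, Finset.mem_range]; omega
  rw [h1, h2, Finset.card_range]

lemma aux_fromBlocks_sub {l m n o : Type*} (A A' : Matrix n l ℝ) (B B' : Matrix n m ℝ)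
    (C C' : Matrix o l ℝ) (D D' : Matrix o m ℝ) :
    fromBlocks A B C D - fromBlocks A' B' C' D'
      = fromBlocks (A - A') (B - B') (C - C') (D - D') := by
  simp only [sub_eq_add_neg, fromBlocks_neg, fromBlocks_add]

theorem stmt11 {n : ℕ} (s : ℕ) (hs : 1 ≤ s) (hsn : s ≤ n)
    (α : Fin n → ℝ) (U : Matrix (Fin n) (Fin n) ℝ) (hU : Uᵀ * U = 1)
    (A : Matrix (Fin n) (Fin n) ℝ) (hA : A = U * Matrix.diagonal α * Uᵀ)
    (αn : ℝ)
    (hαeq : ∀ i : Fin n, n - s ≤ (i:ℕ) → α i = αn)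
    (hαgt : ∀ i : Fin n, (i:ℕ) < n - s → αn < α i)
    (g : Fin n → ℝ) (Δ : ℝ) (hΔ : 0 < Δ)
    (hgperp : ∀ i : Fin n, n - s ≤ (i:ℕ) → (fun j => U j i) ⬝ᵥ g = 0)
    (M : Matrix (Fin n ⊕ Fin n) (Fin n ⊕ Fin n) ℝ)
    (hM : M = Matrix.fromBlocks (-A) ((Δ^2)⁻¹ • Matrix.vecMulVec g g) 1 (-A))
    (l : ℝ) (hl : -αn ≤ l)
    (p : Fin n → ℝ)
    (hp : p = -∑ i ∈ Finset.univ.filter (fun i : Fin n => (i:ℕ) < n - s),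
        (((fun j => U j i) ⬝ᵥ g) / (α i + l)) • (fun j => U j i)) :
    (M - l • 1).det =
      (αn + l)^(2*s) *
        ((∏ i ∈ Finset.univ.filter (fun i : Fin n => (i:ℕ) < n - s), (α i + l)^2) *
          (1 - (p ⬝ᵥ p) / Δ^2)) := by
  have hU' : U * Uᵀ = 1 := mul_eq_one_comm.mp hU
  set S := Finset.univ.filter (fun i : Fin n => (i:ℕ) < n - s) with hS
  set h : Fin n → ℝ := Uᵀ *ᵥ g with hh
  have hhdef : ∀ i, (fun j => U j i) ⬝ᵥ g = h i := by
    intro i; simp [hh, mulVec, dotProduct, transpose_apply]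
  have hsumdef : ∀ i, (∑ x, U x i * g x) = h i := fun i => hhdef i
  have hgz : ∀ i : Fin n, ¬((i:ℕ) < n - s) → h i = 0 := fun i hi =>
    (hhdef i) ▸ hgperp i (le_of_not_gt hi)
  have huu : ∀ i k : Fin n, (fun j => U j i) ⬝ᵥ (fun j => U j k) = if i = k then 1 else 0 := by
    intro i k
    have := congrFun (congrFun hU i) k
    simpa [mul_apply, dotProduct, one_apply, transpose_apply] using this
  -- p ⬝ᵥ p
  have hpp : p ⬝ᵥ p = ∑ i ∈ S, h i * h i / (α i + l)^2 := by
    subst hp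
    rw [neg_dotProduct, dotProduct_neg, neg_neg]
    have expand : ((∑ i ∈ S, (((fun j => U j i) ⬝ᵥ g) / (α i + l)) • (fun j => U j i)) ⬝ᵥ
        (∑ i ∈ S, (((fun j => U j i) ⬝ᵥ g) / (α i + l)) • (fun j => U j i)))
        = ∑ i ∈ S, ∑ k ∈ S,
            (h i / (α i + l)) * (h k / (α k + l)) * (if i = k then (1:ℝ) else 0) := by
      simp only [dotProduct, Finset.sum_apply, Pi.smul_apply, smul_eq_mul,
        Finset.sum_mul_sum]
      rw [Finset.sum_comm]
      refine Finset.sum_congr rfl fun i _ => ?_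
      rw [Finset.sum_comm]
      refine Finset.sum_congr rfl fun k _ => ?_
      rw [← huu i k]
      simp only [dotProduct, Finset.mul_sum]
      refine Finset.sum_congr rfl fun j _ => ?_
      rw [hsumdef i, hsumdef k]
      ring
    rw [expand]
    refine Finset.sum_congr rfl fun i hi => ?_
    rw [Finset.sum_eq_single_of_mem i hi
      (fun k hk hki => by rw [if_neg (fun e => hki e.symm), mul_zero]), if_pos rfl, mul_one,
      div_mul_div_comm]
    ring
  rcases eq_or_lt_of_le hl with hcase | hcase
  · -- hard edge case : αn + l = 0
    have h0 : αn + l = 0 := by rw [← hcase]; ring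
    rw [h0, zero_pow (by omega : 2*s ≠ 0), zero_mul]
    have hn1 : n - 1 < n := by omega
    set i0 : Fin n := ⟨n - 1, hn1⟩ with hi0
    set u : Fin n → ℝ := fun j => U j i0 with hu
    have hi0s : n - s ≤ (i0 : ℕ) := by simp [hi0]; omega
    have hAu : A *ᵥ u = αn • u := by
      have h1 : Uᵀ *ᵥ u = Pi.single i0 1 := by
        ext k
        have := congrFun (congrFun hU k) i0
        simp only [mul_apply, one_apply, transpose_apply] at this
        simp [mulVec, dotProduct, hu, transpose_apply, this, Pi.single_apply, eq_comm]
      rw [hA, ← mulVec_mulVec, ← mulVec_mulVec, h1, diagonal_mulVec_single]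
      ext j
      rw [mulVec_single]
      simp [hu, hαeq i0 hi0s]
      ring
    have hgu : g ⬝ᵥ u = 0 := by
      rw [dotProduct_comm]
      exact hgperp i0 hi0s
    rw [← Matrix.exists_mulVec_eq_zero_iff]
    refine ⟨Sum.elim 0 u, ?_, ?_⟩
    · intro hv
      have hz : ∀ j, u j = 0 := fun j => congrFun hv (Sum.inr j)
      have h1 := congrFun (congrFun hU i0) i0
      simp only [mul_apply, one_apply_eq, transpose_apply] at h1
      have : (∑ j, U j i0 * U j i0) = 0 := by
        apply Finset.sum_eq_zero
        intro j _
        rw [show U j i0 = u j from rfl, hz j, mul_zero]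
      rw [this] at h1
      exact one_ne_zero h1.symm
    · rw [sub_mulVec, smul_mulVec, one_mulVec, hM, fromBlocks_mulVec,
        (show (Sum.elim (0 : Fin n → ℝ) u) ∘ Sum.inl = 0 from rfl),
        (show (Sum.elim (0 : Fin n → ℝ) u) ∘ Sum.inr = u from rfl)]
      have hvv : vecMulVec g g *ᵥ u = (g ⬝ᵥ u) • g := by
        ext i
        simp only [vecMulVec_apply, mulVec, dotProduct, Pi.smul_apply, smul_eq_mul,
          Finset.mul_sum]
        rw [Finset.sum_mul]
        exact Finset.sum_congr rfl fun x _ => by ring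
      ext (i | i)
      · simp [smul_mulVec, hvv, hgu, mulVec_zero]
      · simp only [Sum.elim_inr, Pi.sub_apply, Pi.add_apply, Sum.elim_inl, mulVec_zero,
          Pi.zero_apply, one_mulVec, zero_add, neg_mulVec, hAu, Pi.neg_apply, Pi.smul_apply,
          smul_eq_mul]
        linear_combination (-(u i)) * h0
  · -- main case : αn + l > 0
    have hl0 : 0 < αn + l := by linarith
    have hpos : ∀ i, 0 < α i + l := by
      intro i
      rcases lt_or_ge (i : ℕ) (n - s) with hi | hi
      · have := hαgt i hi; linarith
      · rw [hαeq i hi]; exact hl0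
    set X : Matrix (Fin n) (Fin n) ℝ := Matrix.diagonal (fun i => -(α i + l)) with hX
    set B' : Matrix (Fin n) (Fin n) ℝ := (Δ^2)⁻¹ • vecMulVec h h with hB'
    have hXunit : IsUnit X.det := by
      rw [hX, det_diagonal]
      refine isUnit_iff_ne_zero.mpr (Finset.prod_ne_zero_iff.mpr fun i _ => ?_)
      have := hpos i; intro hc; rw [neg_eq_zero] at hc; linarith
    have hsub : M - l • 1 = fromBlocks (-A - l • (1 : Matrix (Fin n) (Fin n) ℝ))
        ((Δ^2)⁻¹ • vecMulVec g g) 1 (-A - l • 1) := by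
      rw [hM, ← fromBlocks_one, fromBlocks_smul, smul_zero, aux_fromBlocks_sub,
        sub_zero, sub_zero]
    have hdiag : Uᵀ * (-A - l • (1 : Matrix (Fin n) (Fin n) ℝ)) * U = X := by
      rw [hA]
      rw [Matrix.mul_sub, Matrix.sub_mul, Matrix.mul_neg, Matrix.neg_mul,
        Matrix.mul_smul, Matrix.mul_one, Matrix.smul_mul, hU]
      have : Uᵀ * (U * Matrix.diagonal α * Uᵀ) * U = Matrix.diagonal α := by
        rw [← Matrix.mul_assoc, ← Matrix.mul_assoc, hU, Matrix.one_mul, Matrix.mul_assoc,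
          hU, Matrix.mul_one]
      rw [this, hX]
      ext i j
      by_cases hij : i = j
      · subst hij; simp [Matrix.diagonal_apply_eq, Matrix.one_apply_eq]; ring
      · simp [Matrix.diagonal_apply_ne _ hij, Matrix.one_apply_ne hij]
    have hconj : fromBlocks Uᵀ 0 0 Uᵀ * (M - l • 1) * fromBlocks U 0 0 U
        = fromBlocks X B' 1 X := by
      rw [hsub, fromBlocks_multiply, fromBlocks_multiply]
      simp only [Matrix.mul_zero, Matrix.zero_mul, add_zero, zero_add, Matrix.mul_one,
        Matrix.one_mul]
      rw [hdiag, hU, Matrix.mul_smul, Matrix.smul_mul, aux_mul_vecMulVec_mul]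
    have hWdet : (fromBlocks Uᵀ (0 : Matrix (Fin n) (Fin n) ℝ) 0 Uᵀ).det
        * (fromBlocks U (0 : Matrix (Fin n) (Fin n) ℝ) 0 U).det = 1 := by
      rw [det_fromBlocks_zero₁₂, det_fromBlocks_zero₁₂]
      have : Uᵀ.det * U.det = 1 := by rw [← det_mul, hU, det_one]
      nlinarith [this]
    have hMdet : (M - l • 1).det
        = (fromBlocks Uᵀ 0 0 Uᵀ * (M - l • 1) * fromBlocks U 0 0 U).det := by
      rw [det_mul, det_mul]
      linear_combination (-(M - l • 1).det) * hWdet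
    rw [hMdet, hconj, aux_det_fromBlocks_self _ _ hXunit]
    have hXX : X * X = Matrix.diagonal (fun i => (α i + l)^2) := by
      rw [hX, diagonal_mul_diagonal]
      have he : (fun i => -(α i + l) * -(α i + l)) = fun i => (α i + l)^2 :=
        funext fun i => by ring
      rw [he]
    rw [hXX, hB', aux_det_diag_sub _ _ _ (fun i => pow_ne_zero 2 (ne_of_gt (hpos i)))]
    -- split product and sum
    have hprod : (∏ i, (α i + l)^2)
        = (∏ i ∈ S, (α i + l)^2) * ((αn + l)^2)^s := by
      rw [← Finset.prod_filter_mul_prod_filter_not Finset.univ (fun i : Fin n => (i:ℕ) < n - s)]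
      congr 1
      rw [Finset.prod_congr rfl (fun i hi => by
        rw [hαeq i (le_of_not_gt (Finset.mem_filter.mp hi).2)]), Finset.prod_const]
      congr 1
      have hc1 : (Finset.univ.filter (fun i : Fin n => (i:ℕ) < n - s)).card = n - s :=
        aux_card_filter n (n - s) (by omega)
      have hc2 := Finset.card_filter_add_card_filter_not
        (s := (Finset.univ : Finset (Fin n))) (p := fun i : Fin n => (i:ℕ) < n - s)
      rw [hc1, Finset.card_univ, Fintype.card_fin] at hc2
      omega
    have hsum : (∑ i, h i * h i / (α i + l)^2)
        = ∑ i ∈ S, h i * h i / (α i + l)^2 := by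
      rw [← Finset.sum_filter_add_sum_filter_not Finset.univ (fun i : Fin n => (i:ℕ) < n - s)]
      have hz : ∑ i ∈ Finset.univ.filter (fun i : Fin n => ¬ (i:ℕ) < n - s),
          h i * h i / (α i + l)^2 = 0 :=
        Finset.sum_eq_zero fun i hi => by
          rw [hgz i (Finset.mem_filter.mp hi).2, zero_mul, zero_div]
      rw [hz, add_zero]
    rw [hprod, hsum, ← hpp, pow_mul]
    ring
end

section
/- Let T ≻ 0 be symmetric k×k and 0 ≤ λ_k ≤ λ_opt with T + λ_k I ≻ 0. Then (T+λ_k I)^{-1}(T+λ_opt I)^{-1}((T+λ_k I)^{-1} + (T+λ_opt I)^{-1}) ⪰ 2(T+λ_opt I)^{-3} in the Loewner order. -/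
open Matrix

lemma psd_smul {n : Type*} [Fintype n] {c : ℝ} (hc : 0 ≤ c) {A : Matrix n n ℝ}
    (hA : A.PosSemidef) : (c • A).PosSemidef := by
  refine ⟨?_, fun x => ?_⟩
  · show _ = _
    rw [conjTranspose_smul, hA.1.eq, star_trivial]
  · have h := mul_nonneg hc (hA.2 x)
    simp only [Finsupp.mul_sum, star_trivial] at h
    simp only [Matrix.smul_apply, smul_eq_mul, star_trivial]
    exact h.trans_eq (Finsupp.sum_congr fun i _ => Finsupp.sum_congr fun j _ => by ring)

lemma alg_id {R : Type*} [Ring R] [Algebra ℝ R] (a b : R) (h : a * b = b * a) :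
    a*b*(a+b) - (2:ℝ)•b^3 = (3:ℝ)•(b*(a-b)*b) + (a-b)*b*(a-b) := by
  have e3 : b*(a*b) = a*(b*b) := by rw [← mul_assoc, ← h, mul_assoc]
  simp only [mul_add, add_mul, mul_sub, sub_mul, smul_sub, smul_add, pow_succ, pow_zero, one_mul,
    mul_assoc, ← h, e3]
  module

set_option maxHeartbeats 1000000 in
theorem stmt12 {k : ℕ} (T : Matrix (Fin k) (Fin k) ℝ) (hT : T.PosDef)
    (lk lopt : ℝ) (h0 : 0 ≤ lk) (hle : lk ≤ lopt)
    (h1 : (T + lk • 1).PosDef) :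
    ((T + lk • 1)⁻¹ * (T + lopt • 1)⁻¹ * ((T + lk • 1)⁻¹ + (T + lopt • 1)⁻¹)
      - (2:ℝ) • ((T + lopt • 1)⁻¹ ^ 3)).PosSemidef := by
  set P : Matrix (Fin k) (Fin k) ℝ := T + lk • 1 with hPdef
  set Q : Matrix (Fin k) (Fin k) ℝ := T + lopt • 1 with hQdef
  set d : ℝ := lopt - lk with hddef
  have hd : 0 ≤ d := sub_nonneg.mpr hle
  have hlo : 0 ≤ lopt := h0.trans hle
  have hQpd : Q.PosDef := hT.add_posSemidef (psd_smul hlo Matrix.PosSemidef.one)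
  have hdP : IsUnit P.det := isUnit_iff_ne_zero.mpr h1.det_pos.ne'
  have hdQ : IsUnit Q.det := isUnit_iff_ne_zero.mpr hQpd.det_pos.ne'
  have hQP : Q = P + d • 1 := by rw [hPdef, hQdef, hddef]; module
  -- P and Q commute
  have hPQ : P * Q = Q * P := by
    rw [hPdef, hQdef]
    simp only [add_mul, mul_add, Matrix.smul_mul, Matrix.mul_smul, one_mul, mul_one, smul_smul]
    module
  have hcomm : P⁻¹ * Q⁻¹ = Q⁻¹ * P⁻¹ := by
    rw [← Matrix.mul_inv_rev, ← Matrix.mul_inv_rev, hPQ]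
  -- the middle matrix
  have hmidPSD : (d • (1 : Matrix (Fin k) (Fin k) ℝ) + (d*d) • P⁻¹).PosSemidef :=
    (psd_smul hd Matrix.PosSemidef.one).add (psd_smul (mul_self_nonneg d) h1.inv.posSemidef)
  have hmid : Q * (P⁻¹ - Q⁻¹) * Q = d • (1 : Matrix (Fin k) (Fin k) ℝ) + (d*d) • P⁻¹ := by
    have h2 : Q * (P⁻¹ - Q⁻¹) * Q = Q * P⁻¹ * Q - Q := by
      rw [mul_sub, sub_mul, Matrix.mul_nonsing_inv _ hdQ, one_mul]
    rw [h2]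
    rw [hQP]
    simp only [add_mul, mul_add, Matrix.smul_mul, Matrix.mul_smul, one_mul, mul_one, smul_smul,
      Matrix.mul_nonsing_inv _ hdP, Matrix.nonsing_inv_mul _ hdP]
    module
  have key : P⁻¹ - Q⁻¹ = Q⁻¹ * (d • (1 : Matrix (Fin k) (Fin k) ℝ) + (d*d) • P⁻¹) * Q⁻¹ := by
    rw [← hmid, ← Matrix.mul_assoc, ← Matrix.mul_assoc, Matrix.nonsing_inv_mul _ hdQ, one_mul,
      Matrix.mul_assoc, Matrix.mul_nonsing_inv _ hdQ, mul_one]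
  have hQih : Q⁻¹ᴴ = Q⁻¹ := hQpd.inv.isHermitian.eq
  have hC : (P⁻¹ - Q⁻¹).PosSemidef := by
    have h3 := hmidPSD.mul_mul_conjTranspose_same Q⁻¹
    rw [hQih, ← key] at h3
    exact h3
  have hCh : (P⁻¹ - Q⁻¹)ᴴ = P⁻¹ - Q⁻¹ := (h1.inv.isHermitian.sub hQpd.inv.isHermitian).eq
  rw [alg_id _ _ hcomm]
  refine Matrix.PosSemidef.add ?_ ?_
  · refine psd_smul (by norm_num) ?_
    have h4 := hC.mul_mul_conjTranspose_same Q⁻¹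
    rw [hQih] at h4
    exact h4
  · have h5 := hQpd.inv.posSemidef.mul_mul_conjTranspose_same (P⁻¹ - Q⁻¹)
    rw [hCh] at h5
    exact h5
end

section
/- With h_k = -||g||(T_k+λ_k I)^{-1}e_1, h̃_k = -||g||(T_k+λ_opt I)^{-1}e_1, and λ_k ≤ λ_opt, both shifted matrices positive definite: ||h_k||^2 - ||h̃_k||^2 ≥ 2(λ_opt - λ_k) ||g||^2 e_1^T (T_k+λ_opt I)^{-3} e_1. Consequently λ_opt - λ_k ≤ (||h_k||^2 - ||h̃_k||^2)/(2||g||^2 e_1^T(T_k+λ_opt I)^{-3}e_1). -/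
open Matrix

set_option linter.unusedSectionVars false
set_option maxHeartbeats 1000000

variable {n : Type*} [Fintype n] [DecidableEq n]

lemma smul_posSemidef {c : ℝ} (hc : 0 ≤ c) {A : Matrix n n ℝ} (hA : A.PosSemidef) :
    (c • A).PosSemidef := by
  apply Matrix.PosSemidef.of_dotProduct_mulVec_nonneg
  · unfold Matrix.IsHermitian
    rw [conjTranspose_smul, hA.1.eq, star_trivial]
  · intro x
    simp only [smul_mulVec, dotProduct_smul, smul_eq_mul]
    exact mul_nonneg hc (hA.dotProduct_mulVec_nonneg x)

lemma dp_self_nonneg (v : n → ℝ) : 0 ≤ v ⬝ᵥ v := by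
  simpa using dotProduct_star_self_nonneg v

lemma sq_posDef {A : Matrix n n ℝ} (hA : A.PosDef) : (A * A).PosDef := by
  apply Matrix.PosDef.of_dotProduct_mulVec_pos
  · rw [Matrix.IsHermitian, conjTranspose_mul, hA.1.eq]
  · intro x hx
    have hAx : A *ᵥ x ≠ 0 := by
      intro h
      have := hA.dotProduct_mulVec_pos hx
      rw [h] at this
      simp at this
    have hsym : Aᵀ = A := by rw [← conjTranspose_eq_transpose_of_trivial, hA.1.eq]
    have : star x ⬝ᵥ (A * A) *ᵥ x = (A *ᵥ x) ⬝ᵥ (A *ᵥ x) := by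
      rw [← mulVec_mulVec, star_trivial, dotProduct_mulVec, ← mulVec_transpose, hsym]
    rw [this]
    exact lt_of_le_of_ne (dp_self_nonneg _) (fun h => hAx (dotProduct_self_eq_zero.mp h.symm))

theorem stmt13 {k : ℕ} [NeZero k]
    (T : Matrix (Fin k) (Fin k) ℝ) (hT : T.IsSymm)
    (lk lopt : ℝ) (h0 : 0 ≤ lk) (hle : lk ≤ lopt)
    (h1 : (T + lk • 1).PosDef) (h2 : (T + lopt • 1).PosDef)
    (gn : ℝ) (hgn : 0 < gn)
    (hk ht : Fin k → ℝ)
    (hhk : hk = -(gn • (T + lk • 1)⁻¹.mulVec (Pi.single (0 : Fin k) 1)))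
    (hht : ht = -(gn • (T + lopt • 1)⁻¹.mulVec (Pi.single (0 : Fin k) 1))) :
    2 * (lopt - lk) * gn^2 *
        ((Pi.single (0 : Fin k) (1:ℝ)) ⬝ᵥ
          ((T + lopt • 1)⁻¹ ^ 3).mulVec (Pi.single (0 : Fin k) 1))
      ≤ hk ⬝ᵥ hk - ht ⬝ᵥ ht ∧
    lopt - lk ≤ (hk ⬝ᵥ hk - ht ⬝ᵥ ht) /
        (2 * gn^2 * ((Pi.single (0 : Fin k) (1:ℝ)) ⬝ᵥ
          ((T + lopt • 1)⁻¹ ^ 3).mulVec (Pi.single (0 : Fin k) 1))) := by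
  set e : Fin k → ℝ := Pi.single (0 : Fin k) 1 with he
  set A : Matrix (Fin k) (Fin k) ℝ := T + lk • 1 with hA
  set B : Matrix (Fin k) (Fin k) ℝ := T + lopt • 1 with hB
  set δ : ℝ := lopt - lk with hδ
  have hδ0 : 0 ≤ δ := sub_nonneg.2 hle
  -- B = A + δ • 1
  have hBA : B = A + δ • 1 := by
    rw [hA, hB, hδ]; module
  clear_value A B
  set C : Matrix (Fin k) (Fin k) ℝ := B⁻¹ with hC
  set D : Matrix (Fin k) (Fin k) ℝ := A⁻¹ with hD
  clear_value C D
  -- basic symmetry facts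
  have hCsym : Cᵀ = C := by
    rw [hC, ← conjTranspose_eq_transpose_of_trivial, (h2.inv).1.eq]
  have hDsym : Dᵀ = D := by
    rw [hD, ← conjTranspose_eq_transpose_of_trivial, (h1.inv).1.eq]
  have hcomm : A * B = B * A := by
    rw [hBA, mul_add, add_mul, Matrix.mul_smul, Matrix.smul_mul, mul_one, one_mul]
  -- invertibility
  have hAdet : IsUnit A.det := (Matrix.isUnit_iff_isUnit_det A).mp h1.isUnit
  have hBdet : IsUnit B.det := (Matrix.isUnit_iff_isUnit_det B).mp h2.isUnit
  have hAAi : A * D = 1 := by rw [hD]; exact Matrix.mul_nonsing_inv A hAdet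
  have hBiB : C * B = 1 := by rw [hC]; exact Matrix.nonsing_inv_mul B hBdet
  have hBBi : B * C = 1 := by rw [hC]; exact Matrix.mul_nonsing_inv B hBdet
  -- P
  set P : Matrix (Fin k) (Fin k) ℝ := (A * B)⁻¹ with hP
  have hPeq : P = C * D := by rw [hP, hC, hD, Matrix.mul_inv_rev]
  have hPeq' : P = D * C := by rw [hP, hcomm, hC, hD, Matrix.mul_inv_rev]
  clear_value P
  -- A*B posdef
  have hABeq : A * B = A * A + δ • A := by
    rw [hBA, mul_add, Matrix.mul_smul, mul_one]
  have hABpd : (A * B).PosDef := by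
    rw [hABeq]
    exact (sq_posDef h1).add_posSemidef (smul_posSemidef hδ0 h1.posSemidef)
  have hPpd : P.PosDef := by rw [hP]; exact hABpd.inv
  -- resolvent identity: D = C + δ • P
  have hres : D = C + δ • P := by
    have h51 : δ • (1 : Matrix (Fin k) (Fin k) ℝ) = B - A := by rw [hBA]; module
    have h52 : δ • P = C * (δ • (1 : Matrix (Fin k) (Fin k) ℝ)) * D := by
      rw [hPeq, Matrix.mul_smul, Matrix.smul_mul, mul_one]
    rw [h52, h51, mul_sub, sub_mul, hBiB, one_mul, mul_assoc, hAAi, mul_one]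
    abel
  -- commutation C * P = P * C
  have hCP : C * P = P * C := by
    conv_lhs => rw [hPeq']
    conv_rhs => rw [hPeq]
    rw [mul_assoc]
  -- C * P = C*(C*C) + δ • (C*(P*C))
  have hCP3 : C * P = C * (C * C) + δ • (C * (P * C)) := by
    conv_lhs => rw [hPeq, hres]
    rw [mul_add, mul_add, Matrix.mul_smul, Matrix.mul_smul, hCP]
  -- main identity
  have hDD : D * D = C * C + (2 * δ) • (C * P) + (δ * δ) • (P * P) := by
    rw [hres, mul_add, add_mul, add_mul, Matrix.mul_smul, Matrix.smul_mul,
      Matrix.smul_mul, Matrix.mul_smul, smul_smul, ← hCP]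
    module
  have hMid : D * D - C * C - (2 * δ) • (C * (C * C))
      = (δ * δ) • (P * P) + (2 * (δ * δ)) • (C * (P * C)) := by
    rw [hDD, hCP3]
    module
  -- PSD of RHS
  have hPP : (P * P).PosSemidef := (sq_posDef hPpd).posSemidef
  have hCPC : (C * (P * C)).PosSemidef := by
    have h := hPpd.posSemidef.mul_mul_conjTranspose_same C
    rw [conjTranspose_eq_transpose_of_trivial, hCsym, mul_assoc] at h
    exact h
  have hMpsd : ((δ * δ) • (P * P) + (2 * (δ * δ)) • (C * (P * C))).PosSemidef :=
    (smul_posSemidef (mul_self_nonneg δ) hPP).add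
      (smul_posSemidef (by positivity) hCPC)
  -- the main scalar inequality
  have key : 0 ≤ e ⬝ᵥ (D * D) *ᵥ e - e ⬝ᵥ (C * C) *ᵥ e
      - 2 * δ * (e ⬝ᵥ (C * (C * C)) *ᵥ e) := by
    have h := hMpsd.dotProduct_mulVec_nonneg e
    rw [star_trivial, ← hMid] at h
    simpa [sub_mulVec, dotProduct_sub, smul_mulVec, dotProduct_smul, mul_assoc] using h
  -- rewrite dot products
  have hdpD : hk ⬝ᵥ hk = gn ^ 2 * (e ⬝ᵥ (D * D) *ᵥ e) := by
    rw [hhk, neg_dotProduct, dotProduct_neg, neg_neg, smul_dotProduct, dotProduct_smul,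
      smul_eq_mul, smul_eq_mul, ← mul_assoc, ← pow_two]
    congr 1
    rw [← mulVec_mulVec, dotProduct_mulVec, ← mulVec_transpose, hDsym]
    exact dotProduct_comm _ _
  have hdpC : ht ⬝ᵥ ht = gn ^ 2 * (e ⬝ᵥ (C * C) *ᵥ e) := by
    rw [hht, neg_dotProduct, dotProduct_neg, neg_neg, smul_dotProduct, dotProduct_smul,
      smul_eq_mul, smul_eq_mul, ← mul_assoc, ← pow_two]
    congr 1
    rw [← mulVec_mulVec, dotProduct_mulVec, ← mulVec_transpose, hCsym]
    exact dotProduct_comm _ _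
  have hpow3 : (C : Matrix (Fin k) (Fin k) ℝ) ^ 3 = C * (C * C) := by
    rw [pow_succ, pow_succ, pow_one, mul_assoc]
  -- q > 0
  set q : ℝ := e ⬝ᵥ (C * (C * C)) *ᵥ e with hq
  have hqpos : 0 < q := by
    have hene : e ≠ 0 := by
      intro h
      have h9 : e 0 = 1 := Pi.single_eq_same 0 1
      rw [h] at h9
      simp at h9
    have hx : C *ᵥ e ≠ 0 := by
      intro h
      apply hene
      have h8 : B *ᵥ (C *ᵥ e) = e := by rw [mulVec_mulVec, hBBi, one_mulVec]
      rw [h, mulVec_zero] at h8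
      exact h8.symm
    have hform : q = (C *ᵥ e) ⬝ᵥ C *ᵥ (C *ᵥ e) := by
      rw [hq, ← mulVec_mulVec, ← mulVec_mulVec, dotProduct_mulVec, ← mulVec_transpose, hCsym]
    rw [hform]
    have h7 := (hC ▸ h2.inv : C.PosDef).dotProduct_mulVec_pos hx
    rwa [star_trivial] at h7
  -- assemble
  have part1 : 2 * δ * gn ^ 2 * q ≤ hk ⬝ᵥ hk - ht ⬝ᵥ ht := by
    rw [hdpD, hdpC]
    nlinarith [key, pow_pos hgn 2]
  constructor
  · calc 2 * δ * gn ^ 2 * (e ⬝ᵥ (C ^ 3) *ᵥ e) = 2 * δ * gn ^ 2 * q := by rw [hpow3, hq]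
    _ ≤ _ := part1
  · have hden : 0 < 2 * gn ^ 2 * (e ⬝ᵥ (C ^ 3) *ᵥ e) := by
      rw [hpow3, ← hq]; positivity
    rw [le_div_iff₀ hden, hpow3, ← hq]
    calc δ * (2 * gn ^ 2 * q) = 2 * δ * gn ^ 2 * q := by ring
    _ ≤ _ := part1
end

section
/- Let g_k(x) = 2(t^k + t^{-k})^{-1} C_k((κ+1)/(κ-1) - 2x/(α_1-α_n)) where t = (√κ-1)/(√κ+1), κ = (α_1+λ)/(α_n+λ) > 1, and C_k the Chebyshev polynomial. Then 0 ≤ -g_k'(0) ≤ k√κ/(α_1+λ), where α_1+λ = ||A_opt||. -/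
open Polynomial

lemma cheb_eval (s u : ℝ) (hsu : s * u = 1) (hd : s - u ≠ 0) : ∀ n : ℕ,
    (Chebyshev.T ℝ n).eval ((s + u)/2) = (s^n + u^n)/2 ∧
    (Chebyshev.U ℝ n).eval ((s + u)/2) = (s^(n+1) - u^(n+1))/(s - u) := by
  intro n
  induction n using Nat.twoStepInduction with
  | zero =>
    refine ⟨by simp [Chebyshev.T_zero], ?_⟩
    simp only [Nat.cast_zero, Chebyshev.U_zero, eval_one, zero_add, pow_one]
    rw [div_self hd]
  | one =>
    refine ⟨by simp [Chebyshev.T_one], ?_⟩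
    simp only [Nat.cast_one, Chebyshev.U_one, eval_mul, eval_ofNat, eval_X]
    rw [eq_div_iff hd]
    ring
  | more n ih1 ih2 =>
    have hn2 : ((n + 2 : ℕ) : ℤ) = (n:ℤ) + 2 := by push_cast; ring
    have hn1 : ((n + 1 : ℕ) : ℤ) = (n:ℤ) + 1 := by push_cast; ring
    rw [hn1] at ih2
    constructor
    · rw [hn2, Chebyshev.T_add_two]
      simp only [eval_sub, eval_mul, eval_ofNat, eval_X, ih1.1, ih2.1]
      have e1 : 2 * ((s + u) / 2) = s + u := by ring
      rw [e1, ← mul_div_assoc, ← sub_div]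
      congr 1
      linear_combination (s^n + u^n) * hsu
    · rw [hn2, Chebyshev.U_add_two]
      simp only [eval_sub, eval_mul, eval_ofNat, eval_X, ih1.2, ih2.2]
      have e1 : 2 * ((s + u) / 2) = s + u := by ring
      rw [e1, ← mul_div_assoc, ← sub_div]
      congr 1
      linear_combination (s^(n+1) - u^(n+1)) * hsu

set_option maxHeartbeats 1000000 in
theorem stmt15 (k : ℕ) (α1 αn l : ℝ) (h1 : αn < α1) (h2 : 0 < αn + l)
    (κ : ℝ) (hκ : κ = (α1 + l) / (αn + l))
    (t : ℝ) (ht : t = (Real.sqrt κ - 1) / (Real.sqrt κ + 1))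
    (gk : ℝ → ℝ)
    (hgk : gk = fun x => 2 * (t^k + (t^k)⁻¹)⁻¹ *
      (Polynomial.Chebyshev.T ℝ k).eval ((κ+1)/(κ-1) - 2*x/(α1 - αn))) :
    0 ≤ -(deriv gk 0) ∧ -(deriv gk 0) ≤ k * Real.sqrt κ / (α1 + l) := by
  have hκ1 : 1 < κ := by rw [hκ, lt_div_iff₀ h2]; linarith
  set S := Real.sqrt κ with hS
  have hκ0 : (0:ℝ) ≤ κ := by linarith
  have hS1 : 1 < S := by
    have := Real.sqrt_lt_sqrt (by norm_num : (0:ℝ) ≤ 1) hκ1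
    simpa using this
  have hκS : κ = S^2 := (Real.sq_sqrt hκ0).symm
  have hSp1 : (0:ℝ) < S + 1 := by linarith
  have hSm1 : (0:ℝ) < S - 1 := by linarith
  have ht0 : 0 < t := by rw [ht]; positivity
  have ht1 : t < 1 := by rw [ht, div_lt_one hSp1]; linarith
  have hti : 1 < t⁻¹ := by
    rw [lt_inv_comm₀ one_pos ht0]
    simpa using ht1
  have hsu : t⁻¹ * t = 1 := inv_mul_cancel₀ (ne_of_gt ht0)
  have hd : t⁻¹ - t ≠ 0 := by intro h; nlinarith [sub_eq_zero.mp h]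
  have hdpos : 0 < t⁻¹ - t := by nlinarith
  have hE : α1 - αn = (S^2 - 1) * (αn + l) := by
    have : α1 + l = κ * (αn + l) := by rw [hκ]; field_simp
    rw [← hκS]; linarith [this]
  have hα1l : α1 + l = S^2 * (αn + l) := by
    have : α1 + l = κ * (αn + l) := by rw [hκ]; field_simp
    rw [← hκS]; linarith [this]
  have hEpos : (0:ℝ) < α1 - αn := by linarith
  have hS2 : S^2 - 1 ≠ 0 := by nlinarith
  have hc : (κ+1)/(κ-1) = (t⁻¹ + t)/2 := by
    rw [hκS, ht, inv_div]
    field_simp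
    ring
  have hDval : t⁻¹ - t = 4*S/(S^2-1) := by
    rw [ht, inv_div]
    field_simp
    ring
  -- derivative computation
  have hinner : HasDerivAt (fun x : ℝ => (κ+1)/(κ-1) - 2*x/(α1-αn)) (0 - 2*1/(α1-αn)) 0 :=
    (hasDerivAt_const 0 ((κ+1)/(κ-1))).sub (((hasDerivAt_id 0).const_mul 2).div_const (α1-αn))
  have hcomp := (Polynomial.hasDerivAt (Chebyshev.T ℝ (k:ℤ))
      ((κ+1)/(κ-1) - 2*(0:ℝ)/(α1-αn))).comp 0 hinner
  have hgd : HasDerivAt gk (2 * (t^k + (t^k)⁻¹)⁻¹ *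
      (eval ((κ+1)/(κ-1) - 2*(0:ℝ)/(α1-αn)) (derivative (Chebyshev.T ℝ (k:ℤ))) *
        (0 - 2*1/(α1-αn)))) 0 := by
    rw [hgk]
    exact hcomp.const_mul _
  have hpt : (κ+1)/(κ-1) - 2*(0:ℝ)/(α1-αn) = (t⁻¹ + t)/2 := by rw [← hc]; ring
  have hderiv := hgd.deriv
  rw [hpt] at hderiv
  -- case split on k
  rcases Nat.eq_zero_or_pos k with hk0 | hkpos
  · subst hk0
    simp only [Nat.cast_zero, Chebyshev.T_zero, derivative_one, eval_zero, mul_zero,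
      zero_mul] at hderiv
    rw [hderiv]
    norm_num
  · obtain ⟨m, rfl⟩ := Nat.exists_eq_add_of_le hkpos
    set k := 1 + m with hk
    have hkm : (k:ℤ) - 1 = (m:ℕ) := by rw [hk]; push_cast; ring
    rw [Chebyshev.T_derivative_eq_U, hkm] at hderiv
    have hU := (cheb_eval t⁻¹ t hsu hd m).2
    rw [eval_mul, eval_intCast, hU] at hderiv
    have htinv : (t^k)⁻¹ = t⁻¹^k := by rw [inv_pow]
    have hmk : m + 1 = k := by omega
    rw [hmk] at hderiv
    have hApos : (0:ℝ) < t⁻¹^k + t^k := by positivity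
    have hBnn : (0:ℝ) ≤ t⁻¹^k - t^k := by
      have : t^k ≤ t⁻¹^k := pow_le_pow_left₀ (le_of_lt ht0) (by linarith) k
      linarith
    have hval : -(deriv gk 0) = 4*(k:ℝ)*(t⁻¹^k - t^k)/((t⁻¹^k + t^k)*(t⁻¹ - t)*(α1-αn)) := by
      rw [hderiv, htinv]
      push_cast
      field_simp
      ring
    constructor
    · rw [hval]
      apply div_nonneg
      · have : (0:ℝ) ≤ 4*(k:ℝ) := by positivity
        exact mul_nonneg this hBnn
      · positivity
    · rw [hval]
      have hkey : (k:ℝ) * S / (α1 + l) = 4*(k:ℝ)/((t⁻¹ - t)*(α1-αn)) := by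
        rw [hDval, hE, hα1l]
        field_simp
      rw [hkey]
      have step1 : 4*(k:ℝ)*(t⁻¹^k - t^k)/((t⁻¹^k + t^k)*(t⁻¹ - t)*(α1-αn)) ≤
          4*(k:ℝ)*(t⁻¹^k + t^k)/((t⁻¹^k + t^k)*(t⁻¹ - t)*(α1-αn)) := by
        gcongr
        linarith [pow_pos ht0 k]
      have step2 : 4*(k:ℝ)*(t⁻¹^k + t^k)/((t⁻¹^k + t^k)*(t⁻¹ - t)*(α1-αn)) =
          4*(k:ℝ)/((t⁻¹ - t)*(α1-αn)) := by
        rw [show 4*(k:ℝ)*(t⁻¹^k + t^k) = (t⁻¹^k + t^k)*(4*(k:ℝ)) from by ring,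
            show (t⁻¹^k + t^k)*(t⁻¹ - t)*(α1-αn) = (t⁻¹^k + t^k)*((t⁻¹ - t)*(α1-αn)) from by
              ring,
            mul_div_mul_left _ _ (ne_of_gt hApos)]
      linarith [step1, step2.le, step2.ge]
end

section
/- Let M = [[-A, gg^T/Δ^2],[I, -A]] with A_opt = A+λ_opt I ≻ 0 and x_opt = -A_opt^{-1}g, ||x_opt|| = Δ. The vector (x_opt; A_opt^{-1}x_opt) is an eigenvector of M with eigenvalue λ_opt, and consequently if y = (y_1; y_2) is the unit eigenvector for the simple eigenvalue λ_opt, then ||y_1||/||y_2|| = Δ/||A_opt^{-1}x_opt||. -/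
open Matrix

theorem stmt18 {n : ℕ} (A : Matrix (Fin n) (Fin n) ℝ) (hA : A.IsSymm)
    (g : Fin n → ℝ) (hg : g ≠ 0) (Δ : ℝ) (hΔ : 0 < Δ) (lopt : ℝ)
    (hpd : (A + lopt • 1).PosDef)
    (xopt : Fin n → ℝ) (hx : xopt = -(A + lopt • 1)⁻¹.mulVec g)
    (hxn : Real.sqrt (xopt ⬝ᵥ xopt) = Δ)
    (M : Matrix (Fin n ⊕ Fin n) (Fin n ⊕ Fin n) ℝ)
    (hM : M = Matrix.fromBlocks (-A) ((Δ^2)⁻¹ • Matrix.vecMulVec g g) 1 (-A)) :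
    M.mulVec (Sum.elim xopt ((A + lopt • 1)⁻¹.mulVec xopt))
      = lopt • Sum.elim xopt ((A + lopt • 1)⁻¹.mulVec xopt) ∧
    ∀ y1 y2 : Fin n → ℝ,
      M.mulVec (Sum.elim y1 y2) = lopt • Sum.elim y1 y2 →
      Real.sqrt (Sum.elim y1 y2 ⬝ᵥ Sum.elim y1 y2) = 1 →
      (∀ w : Fin n ⊕ Fin n → ℝ, M.mulVec w = lopt • w →
        ∃ c : ℝ, w = c • Sum.elim xopt ((A + lopt • 1)⁻¹.mulVec xopt)) →
      Real.sqrt (y1 ⬝ᵥ y1) / Real.sqrt (y2 ⬝ᵥ y2)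
        = Δ / Real.sqrt ((A + lopt • 1)⁻¹.mulVec xopt ⬝ᵥ (A + lopt • 1)⁻¹.mulVec xopt) := by
  set B : Matrix (Fin n) (Fin n) ℝ := A + lopt • 1 with hBdef
  set z : Fin n → ℝ := B⁻¹.mulVec xopt with hzdef
  have hΔ0 : Δ ≠ 0 := ne_of_gt hΔ
  have hBsymm : Bᵀ = B := by
    rw [hBdef, Matrix.transpose_add, Matrix.transpose_smul, Matrix.transpose_one, hA.eq]
  have hdet : IsUnit B.det := isUnit_iff_ne_zero.mpr (ne_of_gt hpd.det_pos)
  have hBB : B * B⁻¹ = 1 := Matrix.mul_nonsing_inv _ hdet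
  have hBinvsymm : (B⁻¹)ᵀ = B⁻¹ := by
    rw [Matrix.transpose_nonsing_inv, hBsymm]
  have hBx : B.mulVec xopt = -g := by
    rw [hx, Matrix.mulVec_neg, Matrix.mulVec_mulVec, hBB, Matrix.one_mulVec]
  have hxx : xopt ⬝ᵥ xopt = Δ ^ 2 := by
    have h0 : (0:ℝ) ≤ xopt ⬝ᵥ xopt := Finset.sum_nonneg fun i _ => mul_self_nonneg _
    have := Real.sq_sqrt h0
    rw [hxn] at this
    linarith [this]
  have hinvg : B⁻¹.mulVec g = -xopt := by rw [hx]; simp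
  have hgz : g ⬝ᵥ z = -Δ ^ 2 := by
    rw [hzdef, Matrix.dotProduct_mulVec, ← hBinvsymm, Matrix.vecMul_transpose, hinvg]
    simp [hxx]
  have hvmv : ∀ v : Fin n → ℝ, (Matrix.vecMulVec g g).mulVec v = (g ⬝ᵥ v) • g := by
    intro v
    funext i
    simp only [Matrix.mulVec, dotProduct, Matrix.vecMulVec_apply, Pi.smul_apply,
      smul_eq_mul, Finset.sum_mul]
    exact Finset.sum_congr rfl fun j _ => by ring
  have hBz : B.mulVec z = xopt := by
    rw [hzdef, Matrix.mulVec_mulVec, hBB, Matrix.one_mulVec]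
  have hAx : A.mulVec xopt = -g - lopt • xopt := by
    have : A = B - lopt • 1 := by rw [hBdef, add_sub_cancel_right]
    rw [this, Matrix.sub_mulVec, hBx, Matrix.smul_mulVec, Matrix.one_mulVec]
  have hAz : A.mulVec z = xopt - lopt • z := by
    have : A = B - lopt • 1 := by rw [hBdef, add_sub_cancel_right]
    rw [this, Matrix.sub_mulVec, hBz, Matrix.smul_mulVec, Matrix.one_mulVec]
  have hmain : M.mulVec (Sum.elim xopt z) = lopt • Sum.elim xopt z := by
    rw [hM, Matrix.fromBlocks_mulVec]
    simp only [Sum.elim_comp_inl, Sum.elim_comp_inr]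
    have h1 : (-A).mulVec xopt + ((Δ^2)⁻¹ • Matrix.vecMulVec g g).mulVec z = lopt • xopt := by
      rw [Matrix.neg_mulVec, hAx, Matrix.smul_mulVec, hvmv, hgz, smul_smul,
        show (Δ^2)⁻¹ * -Δ^2 = -1 by field_simp, neg_smul, one_smul]
      funext i
      simp only [Pi.add_apply, Pi.neg_apply, Pi.sub_apply, Pi.smul_apply, smul_eq_mul]
      ring
    have h2 : (1 : Matrix (Fin n) (Fin n) ℝ).mulVec xopt + (-A).mulVec z = lopt • z := by
      rw [Matrix.one_mulVec, Matrix.neg_mulVec, hAz]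
      funext i; simp
    rw [h1, h2]
    funext i
    cases i <;> simp
  refine ⟨hmain, ?_⟩
  intro y1 y2 heig hnorm huniq
  obtain ⟨c, hc⟩ := huniq (Sum.elim y1 y2) heig
  have hy1 : y1 = c • xopt := by
    funext i; have := congrFun hc (Sum.inl i); simpa using this
  have hy2 : y2 = c • z := by
    funext i; have := congrFun hc (Sum.inr i); simpa using this
  have hcne : c ≠ 0 := by
    intro h0
    rw [h0, zero_smul] at hc
    rw [hc] at hnorm
    simp [dotProduct] at hnorm
  have hd1 : y1 ⬝ᵥ y1 = c^2 * (xopt ⬝ᵥ xopt) := by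
    rw [hy1, smul_dotProduct, dotProduct_smul]
    simp [sq, mul_assoc]
  have hd2 : y2 ⬝ᵥ y2 = c^2 * (z ⬝ᵥ z) := by
    rw [hy2, smul_dotProduct, dotProduct_smul]
    simp [sq, mul_assoc]
  rw [hd1, hd2, hxx]
  rw [Real.sqrt_mul (sq_nonneg c), Real.sqrt_mul (sq_nonneg c), Real.sqrt_sq_eq_abs]
  rw [mul_div_mul_left _ _ (abs_ne_zero.mpr hcne)]
  rw [Real.sqrt_sq hΔ.le]
end
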